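/- arXiv:1304.7934 — 4 statements merged into one kernel-verified Lean document; each statement's English description precedes it below -/
import Mathlib

section
/- Under the standing assumption, for X ∈ L⁰ the following are equivalent: (1) X ∈ M^φ̂_u; (2) lim_{N→∞} ‖X · 1_{{|X| > N}}‖_φ̂ = 0; (3) lim_n ‖X · 1_{A_n}‖_φ̂ = 0 whenever (A_n) ⊆ 𝔉 satisfies ℙ(A_n) ↓ 0. -/
open MeasureTheory Filter Topology
open scoped ENNReal

noncomputable section

namespace MaxLebExt

variable {Ω : Type*} [MeasurableSpace Ω]

/-- Membership in `L^∞(μ)`. -/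
def MemLinf (μ : Measure Ω) (X : Ω → ℝ) : Prop :=
  MemLp X ⊤ μ

/-- Extended-real-valued expectation `𝔼[f] ∈ [-∞,∞]`, defined as the integral of the
positive part minus the integral of the negative part. -/
def eE (μ : Measure Ω) (f : Ω → ℝ) : EReal :=
  ((∫⁻ ω, ENNReal.ofReal (f ω) ∂μ : ℝ≥0∞) : EReal) -
    ((∫⁻ ω, ENNReal.ofReal (-f ω) ∂μ : ℝ≥0∞) : EReal)

/-- The conjugate `φ*(Z) = sup_{X ∈ L^∞} (𝔼[XZ] - φ(X)) ∈ (-∞,∞]` of a function `φ`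
defined (at least) on `L^∞`. -/
def conj (μ : Measure Ω) (φ : (Ω → ℝ) → ℝ) (Z : Ω → ℝ) : EReal :=
  ⨆ X : {X : Ω → ℝ // MemLinf μ X}, (((∫ ω, X.1 ω * Z ω ∂μ) - φ X.1 : ℝ) : EReal)

/-- `Z ∈ dom φ* = {Z ∈ L¹ : φ*(Z) < ∞}`. -/
def MemDom (μ : Measure Ω) (φ : (Ω → ℝ) → ℝ) (Z : Ω → ℝ) : Prop :=
  Integrable Z μ ∧ conj μ φ Z < ⊤

/-- `X ∈ 𝒟₀ = {X ∈ L⁰ : X⁻ Z ∈ L¹ for all Z ∈ dom φ*}`. -/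
def MemD0 (μ : Measure Ω) (φ : (Ω → ℝ) → ℝ) (X : Ω → ℝ) : Prop :=
  AEStronglyMeasurable X μ ∧
    ∀ Z : Ω → ℝ, MemDom μ φ Z → Integrable (fun ω => max (-(X ω)) 0 * Z ω) μ

/-- The canonical extension `φ̂(X) = sup_{Z ∈ dom φ*} (𝔼[XZ] - φ*(Z))`. -/
def hatphi (μ : Measure Ω) (φ : (Ω → ℝ) → ℝ) (X : Ω → ℝ) : EReal :=
  ⨆ Z : {Z : Ω → ℝ // MemDom μ φ Z},
    (eE μ (fun ω => X ω * Z.1 ω) - conj μ φ Z.1)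

/-- The truncated tail `α|X| 1_{{|X| > N}}`. -/
def tailFn (X : Ω → ℝ) (α : ℝ) (N : ℕ) : Ω → ℝ :=
  Set.indicator {ω | (N : ℝ) < |X ω|} fun ω => α * |X ω|

/-- `X ∈ M^φ̂_u`. -/
def MemMu (μ : Measure Ω) (φ : (Ω → ℝ) → ℝ) (X : Ω → ℝ) : Prop :=
  AEStronglyMeasurable X μ ∧
    ∀ α : ℝ, 0 < α →
      Tendsto (fun N : ℕ => hatphi μ φ (tailFn X α N)) atTop (𝓝 (0 : EReal))

/-- `X ∈ M^φ̂` (the Orlicz heart of `φ̂`). -/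
def MemM (μ : Measure Ω) (φ : (Ω → ℝ) → ℝ) (X : Ω → ℝ) : Prop :=
  AEStronglyMeasurable X μ ∧
    ∀ α : ℝ, 0 < α → hatphi μ φ (fun ω => α * |X ω|) < ⊤

/-- A finite monotone convex function on `L^∞`, compatible with a.e. equality. -/
structure IsMCLinf (μ : Measure Ω) (φ : (Ω → ℝ) → ℝ) : Prop where
  congr : ∀ X Y : Ω → ℝ, MemLinf μ X → MemLinf μ Y → X =ᵐ[μ] Y → φ X = φ Y
  mono : ∀ X Y : Ω → ℝ, MemLinf μ X → MemLinf μ Y → X ≤ᵐ[μ] Y → φ X ≤ φ Y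
  convex : ∀ X Y : Ω → ℝ, MemLinf μ X → MemLinf μ Y → ∀ t : ℝ, 0 ≤ t → t ≤ 1 →
    φ (fun ω => t * X ω + (1 - t) * Y ω) ≤ t * φ X + (1 - t) * φ Y

/-- The Lebesgue property on `L^∞`. -/
def LebesgueLinf (μ : Measure Ω) (φ : (Ω → ℝ) → ℝ) : Prop :=
  ∀ (X : ℕ → Ω → ℝ) (X₀ : Ω → ℝ), (∀ n, MemLinf μ (X n)) → MemLinf μ X₀ →
    (∃ C : ℝ, ∀ n, ∀ᵐ ω ∂μ, |X n ω| ≤ C) →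
    (∀ᵐ ω ∂μ, Tendsto (fun n => X n ω) atTop (𝓝 (X₀ ω))) →
    Tendsto (fun n => φ (X n)) atTop (𝓝 (φ X₀))

/-- The Fatou property on `L^∞`. -/
def FatouLinf (μ : Measure Ω) (φ : (Ω → ℝ) → ℝ) : Prop :=
  ∀ (X : ℕ → Ω → ℝ) (X₀ : Ω → ℝ), (∀ n, MemLinf μ (X n)) → MemLinf μ X₀ →
    (∃ C : ℝ, ∀ n, ∀ᵐ ω ∂μ, |X n ω| ≤ C) →
    (∀ᵐ ω ∂μ, Tendsto (fun n => X n ω) atTop (𝓝 (X₀ ω))) →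
    φ X₀ ≤ liminf (fun n => φ (X n)) atTop

/-- Standing assumption: `φ₀` is a finite monotone convex function on `L^∞` with the
Lebesgue property and `φ₀(0) = 0`. -/
structure Standing (μ : Measure Ω) (φ₀ : (Ω → ℝ) → ℝ) : Prop where
  mc : IsMCLinf μ φ₀
  leb : LebesgueLinf μ φ₀
  zero : φ₀ 0 = 0

/-- A solid vector subspace (ideal) of `L⁰`. -/
structure IsSolidSpace (μ : Measure Ω) (S : Set (Ω → ℝ)) : Prop where
  aesm : ∀ X ∈ S, AEStronglyMeasurable X μ
  zero : (0 : Ω → ℝ) ∈ S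
  add : ∀ X ∈ S, ∀ Y ∈ S, X + Y ∈ S
  smul : ∀ c : ℝ, ∀ X ∈ S, (fun ω => c * X ω) ∈ S
  solid : ∀ X : Ω → ℝ, AEStronglyMeasurable X μ → ∀ Y ∈ S,
    (∀ᵐ ω ∂μ, |X ω| ≤ |Y ω|) → X ∈ S

/-- A finite monotone convex function on a solid space `S`. -/
structure IsMCOn (μ : Measure Ω) (S : Set (Ω → ℝ)) (ψ : (Ω → ℝ) → ℝ) : Prop where
  congr : ∀ X ∈ S, ∀ Y ∈ S, X =ᵐ[μ] Y → ψ X = ψ Y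
  mono : ∀ X ∈ S, ∀ Y ∈ S, X ≤ᵐ[μ] Y → ψ X ≤ ψ Y
  convex : ∀ X ∈ S, ∀ Y ∈ S, ∀ t : ℝ, 0 ≤ t → t ≤ 1 →
    ψ (fun ω => t * X ω + (1 - t) * Y ω) ≤ t * ψ X + (1 - t) * ψ Y

/-- The Lebesgue property on a solid space `S`. -/
def LebesgueOn (μ : Measure Ω) (S : Set (Ω → ℝ)) (ψ : (Ω → ℝ) → ℝ) : Prop :=
  ∀ (X : ℕ → Ω → ℝ) (X₀ Y : Ω → ℝ), (∀ n, X n ∈ S) → X₀ ∈ S → Y ∈ S →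
    (∀ n, ∀ᵐ ω ∂μ, |X n ω| ≤ Y ω) →
    (∀ᵐ ω ∂μ, Tendsto (fun n => X n ω) atTop (𝓝 (X₀ ω))) →
    Tendsto (fun n => ψ (X n)) atTop (𝓝 (ψ X₀))

/-- The Fatou property on a solid space `S`. -/
def FatouOn (μ : Measure Ω) (S : Set (Ω → ℝ)) (ψ : (Ω → ℝ) → ℝ) : Prop :=
  ∀ (X : ℕ → Ω → ℝ) (X₀ Y : Ω → ℝ), (∀ n, X n ∈ S) → X₀ ∈ S → Y ∈ S →
    (∀ n, ∀ᵐ ω ∂μ, |X n ω| ≤ Y ω) →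
    (∀ᵐ ω ∂μ, Tendsto (fun n => X n ω) atTop (𝓝 (X₀ ω))) →
    ψ X₀ ≤ liminf (fun n => ψ (X n)) atTop

/-- A proper monotone convex function with values in `(-∞,∞]` on a solid space `S`. -/
structure IsMCOnE (μ : Measure Ω) (S : Set (Ω → ℝ)) (φ : (Ω → ℝ) → EReal) : Prop where
  congr : ∀ X ∈ S, ∀ Y ∈ S, X =ᵐ[μ] Y → φ X = φ Y
  mono : ∀ X ∈ S, ∀ Y ∈ S, X ≤ᵐ[μ] Y → φ X ≤ φ Y
  convex : ∀ X ∈ S, ∀ Y ∈ S, ∀ t : ℝ, 0 < t → t < 1 →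
    φ (fun ω => t * X ω + (1 - t) * Y ω) ≤ (t : EReal) * φ X + ((1 - t : ℝ) : EReal) * φ Y
  ne_bot : ∀ X ∈ S, φ X ≠ ⊥
  exists_ne_top : ∃ X ∈ S, φ X ≠ ⊤

/-- The Lebesgue property on a solid space `S` for an extended-real-valued function. -/
def LebesgueOnE (μ : Measure Ω) (S : Set (Ω → ℝ)) (φ : (Ω → ℝ) → EReal) : Prop :=
  ∀ (X : ℕ → Ω → ℝ) (X₀ Y : Ω → ℝ), (∀ n, X n ∈ S) → X₀ ∈ S → Y ∈ S →
    (∀ n, ∀ᵐ ω ∂μ, |X n ω| ≤ Y ω) →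
    (∀ᵐ ω ∂μ, Tendsto (fun n => X n ω) atTop (𝓝 (X₀ ω))) →
    Tendsto (fun n => φ (X n)) atTop (𝓝 (φ X₀))

/-- `(φ, S)` is a Lebesgue extension of `(φ₀, L^∞)`. -/
structure IsLebExt (μ : Measure Ω) (φ₀ : (Ω → ℝ) → ℝ)
    (S : Set (Ω → ℝ)) (φ : (Ω → ℝ) → EReal) : Prop where
  solid : IsSolidSpace μ S
  linf_mem : ∀ X : Ω → ℝ, MemLinf μ X → X ∈ S
  mc : IsMCOnE μ S φ
  leb : LebesgueOnE μ S φ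
  restrict : ∀ X : Ω → ℝ, MemLinf μ X → φ X = (φ₀ X : EReal)

/-- The gauge (Luxemburg-type) functional `‖X‖_φ̂ = inf {λ > 0 : φ̂(|X|/λ) ≤ 1}`,
with `inf ∅ = +∞`. -/
def gauge (μ : Measure Ω) (φ : (Ω → ℝ) → ℝ) (X : Ω → ℝ) : EReal :=
  sInf {l : EReal | ∃ r : ℝ, 0 < r ∧ l = (r : EReal) ∧
    hatphi μ φ (fun ω => |X ω| / r) ≤ 1}

section A

variable {μ : Measure Ω} {φ₀ : (Ω → ℝ) → ℝ}

lemma memLinf_of_bound {X : Ω → ℝ} (hm : AEStronglyMeasurable X μ) (C : ℝ)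
    (hb : ∀ᵐ ω ∂μ, |X ω| ≤ C) : MemLinf μ X :=
  memLp_top_of_bound hm C (by simpa [Real.norm_eq_abs] using hb)

lemma memLinf_zero : MemLinf μ (0 : Ω → ℝ) := MemLp.zero

lemma MemLinf.bound {X : Ω → ℝ} (hX : MemLinf μ X) :
    ∀ᵐ ω ∂μ, |X ω| ≤ (eLpNormEssSup X μ).toReal := by
  have h := MeasureTheory.ae_le_eLpNormEssSup (f := X) (μ := μ)
  have hlt : eLpNormEssSup X μ ≠ ⊤ := by
    simpa [eLpNorm_exponent_top] using hX.2.ne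
  filter_upwards [h] with ω hω
  have := ENNReal.toReal_mono hlt hω
  simpa [Real.norm_eq_abs] using this

lemma MemLinf.const_mul {X : Ω → ℝ} (hX : MemLinf μ X) (c : ℝ) :
    MemLinf μ (fun ω => c * X ω) := MemLp.const_mul hX c

/-- The subspace `L^∞ ⊆ L⁰` as a submodule (of everywhere-defined functions). -/
def linfSub (μ : Measure Ω) : Submodule ℝ (Ω → ℝ) where
  carrier := {X | MemLinf μ X}
  add_mem' := fun hx hy => MemLp.add hx hy
  zero_mem' := memLinf_zero
  smul_mem' := fun c X hX => by
    exact MemLp.const_smul hX c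

/-- Slope monotonicity for `t ↦ φ₀(tX)`. -/
lemma slope_mono (h : Standing μ φ₀) {X : Ω → ℝ} (hX : MemLinf μ X) {s t : ℝ}
    (hs : 0 < s) (hst : s ≤ t) :
    φ₀ (fun ω => s * X ω) / s ≤ φ₀ (fun ω => t * X ω) / t := by
  have ht : 0 < t := lt_of_lt_of_le hs hst
  rcases eq_or_lt_of_le hst with rfl | hlt
  · exact le_refl _
  have hθ0 : 0 ≤ s / t := by positivity
  have hθ1 : s / t ≤ 1 := by
    rw [div_le_one ht]; exact hst
  have hconv := h.mc.convex (fun ω => t * X ω) 0 (hX.const_mul t) memLinf_zero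
    (s / t) hθ0 hθ1
  have harg : (fun ω => s / t * (t * X ω) + (1 - s / t) * (0 : Ω → ℝ) ω)
      = fun ω => s * X ω := by
    funext ω
    have hts : s / t * t = s := div_mul_cancel₀ s ht.ne'
    simp only [Pi.zero_apply, mul_zero, add_zero]
    rw [← mul_assoc, hts]
  rw [harg, h.zero] at hconv
  have key : φ₀ (fun ω => s * X ω) ≤ s / t * φ₀ (fun ω => t * X ω) := by
    simpa using hconv
  rw [div_le_div_iff₀ hs ht]
  have := mul_le_mul_of_nonneg_right key ht.le
  calc φ₀ (fun ω => s * X ω) * t ≤ s / t * φ₀ (fun ω => t * X ω) * t := this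
    _ = φ₀ (fun ω => t * X ω) * s := by field_simp

/-- Lower bound for slopes. -/
lemma slope_lb (h : Standing μ φ₀) {X : Ω → ℝ} (hX : MemLinf μ X) {t : ℝ} (ht : 0 < t) :
    -φ₀ (fun ω => -X ω) ≤ φ₀ (fun ω => t * X ω) / t := by
  have ht1 : (0:ℝ) < t + 1 := by linarith
  have hmemneg : MemLinf μ (fun ω => -X ω) := by
    simpa using hX.const_mul (-1)
  have hθ0 : 0 ≤ t / (t + 1) := by positivity
  have hθ1 : t / (t + 1) ≤ 1 := by
    rw [div_le_one ht1]; linarith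
  have hconv := h.mc.convex (fun ω => -X ω) (fun ω => t * X ω) hmemneg
    (hX.const_mul t) (t / (t + 1)) hθ0 hθ1
  have harg : (fun ω => t / (t + 1) * (-X ω) + (1 - t / (t + 1)) * (t * X ω))
      = (0 : Ω → ℝ) := by
    funext ω
    have h1 : (1 : ℝ) - t / (t+1) = 1 / (t+1) := by field_simp; ring
    rw [h1]
    field_simp
    simp
  rw [harg, h.zero] at hconv
  rw [le_div_iff₀ ht]
  have h1 : (1 : ℝ) - t / (t+1) = 1 / (t+1) := by field_simp; ring
  rw [h1] at hconv
  have := mul_le_mul_of_nonneg_right hconv (le_of_lt ht1)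
  rw [zero_mul] at this
  have hexp : (t / (t + 1) * φ₀ (fun ω => -X ω) + 1 / (t + 1) * φ₀ (fun ω => t * X ω)) * (t+1)
      = t * φ₀ (fun ω => -X ω) + φ₀ (fun ω => t * X ω) := by
    field_simp
  rw [hexp] at this
  nlinarith

/-- The set of slopes of `φ₀` at `0` in direction `X`. -/
def slopeSet (φ₀ : (Ω → ℝ) → ℝ) (X : Ω → ℝ) : Set ℝ :=
  {y | ∃ t : ℝ, 0 < t ∧ y = φ₀ (fun ω => t * X ω) / t}

/-- The directional derivative of `φ₀` at `0`: a sublinear minorant of `φ₀`. -/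
def dirDeriv (φ₀ : (Ω → ℝ) → ℝ) (X : Ω → ℝ) : ℝ := sInf (slopeSet φ₀ X)

lemma slopeSet_nonempty (X : Ω → ℝ) : (slopeSet φ₀ X).Nonempty :=
  ⟨φ₀ (fun ω => 1 * X ω) / 1, 1, one_pos, rfl⟩

lemma slopeSet_bddBelow (h : Standing μ φ₀) {X : Ω → ℝ} (hX : MemLinf μ X) :
    BddBelow (slopeSet φ₀ X) := by
  refine ⟨-φ₀ (fun ω => -X ω), ?_⟩
  rintro y ⟨t, ht, rfl⟩
  exact slope_lb h hX ht

lemma dirDeriv_le_phi (h : Standing μ φ₀) {X : Ω → ℝ} (hX : MemLinf μ X) :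
    dirDeriv φ₀ X ≤ φ₀ X := by
  have hmem : φ₀ (fun ω => 1 * X ω) / 1 ∈ slopeSet φ₀ X := ⟨1, one_pos, rfl⟩
  have := csInf_le (slopeSet_bddBelow h hX) hmem
  have harg : (fun ω => 1 * X ω) = X := funext fun ω => one_mul _
  rwa [harg, div_one] at this

lemma le_dirDeriv_slope (h : Standing μ φ₀) {X : Ω → ℝ} (hX : MemLinf μ X) {t : ℝ}
    (ht : 0 < t) : dirDeriv φ₀ X ≤ φ₀ (fun ω => t * X ω) / t :=
  csInf_le (slopeSet_bddBelow h hX) ⟨t, ht, rfl⟩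

lemma dirDeriv_smul (h : Standing μ φ₀) {X : Ω → ℝ} (hX : MemLinf μ X) {c : ℝ}
    (hc : 0 < c) : dirDeriv φ₀ (fun ω => c * X ω) = c * dirDeriv φ₀ X := by
  have hXc : MemLinf μ (fun ω => c * X ω) := hX.const_mul c
  apply le_antisymm
  · -- dirDeriv (cX) ≤ c * y for every slope y of X
    have hle : ∀ y ∈ slopeSet φ₀ X, dirDeriv φ₀ (fun ω => c * X ω) / c ≤ y := by
      rintro y ⟨t, ht, rfl⟩
      rw [div_le_iff₀ hc]
      have hmem : φ₀ (fun ω => (t / c) * (fun ω' => c * X ω') ω) / (t / c)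
          ∈ slopeSet φ₀ (fun ω => c * X ω) := ⟨t / c, by positivity, rfl⟩
      have := csInf_le (slopeSet_bddBelow h hXc) hmem
      refine le_trans this (le_of_eq ?_)
      have harg : (fun ω => (t / c) * (fun ω' => c * X ω') ω) = fun ω => t * X ω := by
        funext ω
        field_simp
      rw [harg]
      field_simp
    have := le_csInf (slopeSet_nonempty X) hle
    rw [div_le_iff₀ hc] at this
    calc dirDeriv φ₀ (fun ω => c * X ω) ≤ sInf (slopeSet φ₀ X) * c := this
      _ = c * dirDeriv φ₀ X := by rw [dirDeriv]; ring
  · -- c * dirDeriv X ≤ each slope of cX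
    refine le_csInf (slopeSet_nonempty _) ?_
    rintro y ⟨t, ht, rfl⟩
    have hmem : φ₀ (fun ω => (t * c) * X ω) / (t * c) ∈ slopeSet φ₀ X :=
      ⟨t * c, by positivity, rfl⟩
    have h1 := csInf_le (slopeSet_bddBelow h hX) hmem
    have h2 := mul_le_mul_of_nonneg_left h1 hc.le
    refine le_trans h2 (le_of_eq ?_)
    have harg : (fun ω => t * (fun ω' => c * X ω') ω) = fun ω => (t * c) * X ω := by
      funext ω; ring
    rw [harg]
    field_simp

lemma dirDeriv_add (h : Standing μ φ₀) {X Y : Ω → ℝ} (hX : MemLinf μ X)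
    (hY : MemLinf μ Y) :
    dirDeriv φ₀ (fun ω => X ω + Y ω) ≤ dirDeriv φ₀ X + dirDeriv φ₀ Y := by
  have hXY : MemLinf μ (fun ω => X ω + Y ω) := MemLp.add hX hY
  refine le_of_forall_pos_le_add ?_
  intro ε hε
  obtain ⟨y1, hy1mem, hy1⟩ := exists_lt_of_csInf_lt (slopeSet_nonempty X)
    (show sInf (slopeSet φ₀ X) < sInf (slopeSet φ₀ X) + ε / 2 by linarith)
  obtain ⟨y2, hy2mem, hy2⟩ := exists_lt_of_csInf_lt (slopeSet_nonempty Y)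
    (show sInf (slopeSet φ₀ Y) < sInf (slopeSet φ₀ Y) + ε / 2 by linarith)
  obtain ⟨t1, ht1, rfl⟩ := hy1mem
  obtain ⟨t2, ht2, rfl⟩ := hy2mem
  set t := min t1 t2 with htdef
  have ht : 0 < t := lt_min ht1 ht2
  -- midpoint convexity
  have hconv := h.mc.convex (fun ω => t * X ω) (fun ω => t * Y ω)
    (hX.const_mul t) (hY.const_mul t) (1/2) (by norm_num) (by norm_num)
  have harg : (fun ω => (1:ℝ)/2 * (t * X ω) + (1 - 1/2) * (t * Y ω))
      = fun ω => (t/2) * (fun ω' => X ω' + Y ω') ω := by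
    funext ω; ring_nf
  rw [harg] at hconv
  have hmain : dirDeriv φ₀ (fun ω => X ω + Y ω)
      ≤ φ₀ (fun ω => t * X ω) / t + φ₀ (fun ω => t * Y ω) / t := by
    have hstep := le_dirDeriv_slope h hXY (t := t/2) (by positivity)
    refine le_trans hstep ?_
    rw [div_le_iff₀ (by positivity : (0:ℝ) < t/2)]
    have hhalf : (1 - (1:ℝ)/2) = 1/2 := by norm_num
    rw [hhalf] at hconv
    calc φ₀ (fun ω => t / 2 * (fun ω' => X ω' + Y ω') ω)
        ≤ 1/2 * φ₀ (fun ω => t * X ω) + 1/2 * φ₀ (fun ω => t * Y ω) := hconv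
      _ = (φ₀ (fun ω => t * X ω) / t + φ₀ (fun ω => t * Y ω) / t) * (t/2) := by
          field_simp
  have hm1 : φ₀ (fun ω => t * X ω) / t ≤ φ₀ (fun ω => t1 * X ω) / t1 :=
    slope_mono h hX ht (min_le_left _ _)
  have hm2 : φ₀ (fun ω => t * Y ω) / t ≤ φ₀ (fun ω => t2 * Y ω) / t2 :=
    slope_mono h hY ht (min_le_right _ _)
  calc dirDeriv φ₀ (fun ω => X ω + Y ω)
      ≤ φ₀ (fun ω => t * X ω) / t + φ₀ (fun ω => t * Y ω) / t := hmain
    _ ≤ φ₀ (fun ω => t1 * X ω) / t1 + φ₀ (fun ω => t2 * Y ω) / t2 := by linarith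
    _ ≤ (dirDeriv φ₀ X + ε/2) + (dirDeriv φ₀ Y + ε/2) := by
        simp only [dirDeriv]; linarith
    _ = dirDeriv φ₀ X + dirDeriv φ₀ Y + ε := by ring

lemma dirDeriv_zero_nonneg (h : Standing μ φ₀) : 0 ≤ dirDeriv φ₀ (0 : Ω → ℝ) := by
  refine le_csInf (slopeSet_nonempty _) ?_
  rintro y ⟨t, ht, rfl⟩
  have harg : (fun ω => t * (0 : Ω → ℝ) ω) = (0 : Ω → ℝ) := by
    funext ω; simp
  rw [harg, h.zero, zero_div]

/-- Existence of a positive linear functional on `L^∞` dominated by `φ₀`. -/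
lemma exists_linear (h : Standing μ φ₀) :
    ∃ L : ↥(linfSub μ) →ₗ[ℝ] ℝ, ∀ x : ↥(linfSub μ), L x ≤ dirDeriv φ₀ x.1 := by
  have hN_hom : ∀ c : ℝ, 0 < c → ∀ x : ↥(linfSub μ),
      dirDeriv φ₀ (c • x).1 = c * dirDeriv φ₀ x.1 := by
    intro c hc x
    have : ((c • x : ↥(linfSub μ)) : Ω → ℝ) = fun ω => c * x.1 ω := by
      funext ω; rfl
    rw [this]
    exact dirDeriv_smul h x.2 hc
  have hN_add : ∀ x y : ↥(linfSub μ),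
      dirDeriv φ₀ (x + y).1 ≤ dirDeriv φ₀ x.1 + dirDeriv φ₀ y.1 := by
    intro x y
    have : ((x + y : ↥(linfSub μ)) : Ω → ℝ) = fun ω => x.1 ω + y.1 ω := by
      funext ω; rfl
    rw [this]
    exact dirDeriv_add h x.2 y.2
  obtain ⟨L, _, hL⟩ := exists_extension_of_le_sublinear
    (⟨⊥, 0⟩ : (↥(linfSub μ)) →ₗ.[ℝ] ℝ) (fun x => dirDeriv φ₀ x.1)
    hN_hom hN_add (by
      rintro ⟨x, hx⟩
      have hx0 : x = 0 := by simpa using hx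
      subst hx0
      have h0 : ((0 : ↥(linfSub μ)) : Ω → ℝ) = (0 : Ω → ℝ) := rfl
      simpa [h0] using dirDeriv_zero_nonneg h)
  exact ⟨L, hL⟩

end A

section C

variable {μ : Measure Ω} {φ₀ : (Ω → ℝ) → ℝ}

/-- The indicator of a set, as a real function. -/
def indF (A : Set Ω) : Ω → ℝ := Set.indicator A (fun _ => (1:ℝ))

lemma indF_nonneg (A : Set Ω) (ω : Ω) : 0 ≤ indF A ω := by
  unfold indF
  by_cases h : ω ∈ A <;> simp [Set.indicator_apply, h]

lemma indF_le_one (A : Set Ω) (ω : Ω) : indF A ω ≤ 1 := by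
  unfold indF
  by_cases h : ω ∈ A <;> simp [Set.indicator_apply, h]

lemma memLinf_indF {A : Set Ω} (hA : MeasurableSet A) : MemLinf μ (indF A) := by
  refine memLinf_of_bound ?_ 1 (Filter.Eventually.of_forall fun ω => ?_)
  · exact ((stronglyMeasurable_const.indicator hA)).aestronglyMeasurable
  · rw [abs_le]
    exact ⟨by linarith [indF_nonneg A ω], indF_le_one A ω⟩

variable (h : Standing μ φ₀)

section L

variable {L : ↥(linfSub μ) →ₗ[ℝ] ℝ} (hL : ∀ x : ↥(linfSub μ), L x ≤ dirDeriv φ₀ x.1)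

include h hL

lemma L_le_phi (x : ↥(linfSub μ)) : L x ≤ φ₀ x.1 :=
  (hL x).trans (dirDeriv_le_phi h x.2)

lemma L_nonpos {x : ↥(linfSub μ)} (hx : ∀ᵐ ω ∂μ, x.1 ω ≤ 0) : L x ≤ 0 := by
  refine (L_le_phi h hL x).trans ?_
  have := h.mc.mono x.1 0 x.2 memLinf_zero (by filter_upwards [hx] with ω hω; exact hω)
  rwa [h.zero] at this

lemma L_nonneg {x : ↥(linfSub μ)} (hx : ∀ᵐ ω ∂μ, 0 ≤ x.1 ω) : 0 ≤ L x := by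
  have hneg : L (-x) ≤ 0 := by
    refine L_nonpos h hL ?_
    filter_upwards [hx] with ω hω
    have : ((-x : ↥(linfSub μ)) : Ω → ℝ) ω = -(x.1 ω) := rfl
    rw [this]; linarith
  rw [map_neg] at hneg; linarith

/-- vanishing along decreasing-to-empty sequences of sets. -/
lemma L_ind_tendsto_zero {B : ℕ → Set Ω} (hB : ∀ n, MeasurableSet (B n))
    (hBe : ∀ ω, ∀ᶠ n in atTop, ω ∉ B n) :
    Tendsto (fun n => L ⟨indF (B n), memLinf_indF (hB n)⟩) atTop (𝓝 0) := by
  have hphi : Tendsto (fun n => φ₀ (indF (B n))) atTop (𝓝 0) := by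
    have := h.leb (fun n => indF (B n)) 0 (fun n => memLinf_indF (hB n)) memLinf_zero
      ⟨1, fun n => Filter.Eventually.of_forall fun ω => by
        rw [abs_le]; exact ⟨by linarith [indF_nonneg (B n) ω], indF_le_one (B n) ω⟩⟩
      (Filter.Eventually.of_forall fun ω => by
        have : ∀ᶠ n in atTop, indF (B n) ω = 0 := by
          filter_upwards [hBe ω] with n hn
          simp [indF, Set.indicator_apply, hn]
        rw [show (0:Ω → ℝ) ω = 0 from rfl]
        exact Tendsto.congr' (this.mono fun n hn => hn.symm) tendsto_const_nhds)
    rwa [h.zero] at this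
  refine squeeze_zero (fun n => ?_) (fun n => ?_) hphi
  · exact L_nonneg h hL (Filter.Eventually.of_forall fun ω => indF_nonneg _ ω)
  · exact L_le_phi h hL _

lemma L_ind_union {A B : Set Ω} (hA : MeasurableSet A) (hB : MeasurableSet B)
    (hAB : Disjoint A B) :
    L ⟨indF (A ∪ B), memLinf_indF (hA.union hB)⟩
      = L ⟨indF A, memLinf_indF hA⟩ + L ⟨indF B, memLinf_indF hB⟩ := by
  have : (⟨indF (A ∪ B), memLinf_indF (hA.union hB)⟩ : ↥(linfSub μ))
      = ⟨indF A, memLinf_indF hA⟩ + ⟨indF B, memLinf_indF hB⟩ := by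
    apply Subtype.ext
    show indF (A ∪ B) = indF A + indF B
    unfold indF
    exact Set.indicator_union_of_disjoint hAB _
  rw [this, map_add]

omit h hL in
lemma vInd_empty : (⟨indF (∅ : Set Ω), memLinf_indF MeasurableSet.empty⟩ : ↥(linfSub μ)) = 0 := by
  apply Subtype.ext
  funext ω
  simp [indF]

/-- The measure induced by `L`. -/
def nuMeasure : Measure Ω :=
  Measure.ofMeasurable (fun A hA => ENNReal.ofReal (L ⟨indF A, memLinf_indF hA⟩))
    (by
      show ENNReal.ofReal (L ⟨indF ∅, memLinf_indF MeasurableSet.empty⟩) = 0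
      rw [vInd_empty, map_zero, ENNReal.ofReal_zero])
    (by
      intro f hf hdisj
      -- partial sums
      have hS : ∀ n : ℕ, MeasurableSet (⋃ i ∈ Finset.range n, f i) :=
        fun n => (Finset.range n).measurableSet_biUnion (fun i _ => hf i)
      have hU : MeasurableSet (⋃ i, f i) := MeasurableSet.iUnion hf
      have hpart : ∀ n : ℕ, (∑ i ∈ Finset.range n, L ⟨indF (f i), memLinf_indF (hf i)⟩)
          = L ⟨indF (⋃ i ∈ Finset.range n, f i), memLinf_indF (hS n)⟩ := by
        intro n
        induction n with
        | zero => simp [vInd_empty]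
        | succ n ih =>
          rw [Finset.sum_range_succ, ih]
          skip
          have hst : (⋃ i ∈ Finset.range (n+1), f i)
              = (⋃ i ∈ Finset.range n, f i) ∪ f n := by
            ext ω
            simp only [Set.mem_iUnion, Finset.mem_range, Set.mem_union]
            constructor
            · rintro ⟨i, hi, hmem⟩
              rcases Nat.lt_succ_iff_lt_or_eq.mp hi with hlt | rfl
              · exact Or.inl ⟨i, hlt, hmem⟩
              · exact Or.inr hmem
            · rintro (⟨i, hi, hmem⟩ | hmem)
              · exact ⟨i, Nat.lt_succ_of_lt hi, hmem⟩
              · exact ⟨n, Nat.lt_succ_self n, hmem⟩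
          have hdisj2 : Disjoint (⋃ i ∈ Finset.range n, f i) (f n) := by
            refine Set.disjoint_left.mpr ?_
            rintro ω hω hωn
            simp only [Set.mem_iUnion, Finset.mem_range] at hω
            obtain ⟨i, hi, hωi⟩ := hω
            exact Set.disjoint_left.mp (hdisj (Nat.ne_of_lt hi)) hωi hωn
          have hx : (⟨indF (⋃ i ∈ Finset.range (n+1), f i), memLinf_indF (hS (n+1))⟩ : ↥(linfSub μ))
              = ⟨indF ((⋃ i ∈ Finset.range n, f i) ∪ f n), memLinf_indF ((hS n).union (hf n))⟩ :=
            Subtype.ext (congrArg indF hst)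
          rw [hx, L_ind_union (μ := μ) h hL (hS n) (hf n) hdisj2]
      -- limit of partial sums
      have hBmeas : ∀ n, MeasurableSet ((⋃ i, f i) \ (⋃ i ∈ Finset.range n, f i)) :=
        fun n => hU.diff (hS n)
      have hBe : ∀ ω, ∀ᶠ n in atTop, ω ∉ (⋃ i, f i) \ (⋃ i ∈ Finset.range n, f i) := by
        intro ω
        by_cases hω : ω ∈ ⋃ i, f i
        · obtain ⟨i, hi⟩ := Set.mem_iUnion.mp hω
          filter_upwards [eventually_ge_atTop (i+1)] with n hn
          intro hmem
          exact hmem.2 (Set.mem_biUnion (Finset.mem_range.mpr hn) hi)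
        · exact Filter.Eventually.of_forall fun n hmem => hω hmem.1
      have htend0 := L_ind_tendsto_zero h hL hBmeas hBe
      have hdecomp : ∀ n, L ⟨indF (⋃ i ∈ Finset.range n, f i), memLinf_indF (hS n)⟩
          = L ⟨indF (⋃ i, f i), memLinf_indF hU⟩
            - L ⟨indF ((⋃ i, f i) \ (⋃ i ∈ Finset.range n, f i)), memLinf_indF (hBmeas n)⟩ := by
        intro n
        have hsub : (⋃ i ∈ Finset.range n, f i) ⊆ ⋃ i, f i := by
          intro ω hω
          simp only [Set.mem_iUnion, Finset.mem_range] at hω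
          obtain ⟨i, _, hωi⟩ := hω
          exact Set.mem_iUnion.mpr ⟨i, hωi⟩
        have hun : (⋃ i ∈ Finset.range n, f i) ∪ ((⋃ i, f i) \ (⋃ i ∈ Finset.range n, f i))
            = ⋃ i, f i := Set.union_diff_cancel hsub
        have hd : Disjoint (⋃ i ∈ Finset.range n, f i)
            ((⋃ i, f i) \ (⋃ i ∈ Finset.range n, f i)) := Set.disjoint_sdiff_right
        have hLU := L_ind_union (μ := μ) h hL (hS n) (hBmeas n) hd
        have hx : (⟨indF ((⋃ i ∈ Finset.range n, f i) ∪ ((⋃ i, f i) \ (⋃ i ∈ Finset.range n, f i))), memLinf_indF ((hS n).union (hBmeas n))⟩ : ↥(linfSub μ))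
            = ⟨indF (⋃ i, f i), memLinf_indF hU⟩ := Subtype.ext (congrArg indF hun)
        rw [hx] at hLU
        linarith
      have htends : Tendsto (fun n => ∑ i ∈ Finset.range n, L ⟨indF (f i), memLinf_indF (hf i)⟩)
          atTop (𝓝 (L ⟨indF (⋃ i, f i), memLinf_indF hU⟩)) := by
        simp only [hpart, hdecomp]
        simpa using (tendsto_const_nhds (x := L ⟨indF (⋃ i, f i), memLinf_indF hU⟩)
          (f := atTop)).sub htend0
      have hnn : ∀ i, 0 ≤ L ⟨indF (f i), memLinf_indF (hf i)⟩ :=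
        fun i => L_nonneg h hL (Filter.Eventually.of_forall fun ω => indF_nonneg _ ω)
      have hhs : HasSum (fun i => L ⟨indF (f i), memLinf_indF (hf i)⟩)
          (L ⟨indF (⋃ i, f i), memLinf_indF hU⟩) :=
        (hasSum_iff_tendsto_nat_of_nonneg hnn _).mpr htends
      show ENNReal.ofReal (L ⟨indF (⋃ i, f i), memLinf_indF hU⟩)
          = ∑' i, ENNReal.ofReal (L ⟨indF (f i), memLinf_indF (hf i)⟩)
      rw [← hhs.tsum_eq, ENNReal.ofReal_tsum_of_nonneg hnn hhs.summable])

lemma nuMeasure_apply {A : Set Ω} (hA : MeasurableSet A) :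
    nuMeasure (μ := μ) (φ₀ := φ₀) h hL A = ENNReal.ofReal (L ⟨indF A, memLinf_indF hA⟩) :=
  Measure.ofMeasurable_apply A hA

lemma nuMeasure_finite : IsFiniteMeasure (nuMeasure (μ := μ) (φ₀ := φ₀) h hL) := by
  constructor
  rw [nuMeasure_apply h hL MeasurableSet.univ]
  exact ENNReal.ofReal_lt_top

lemma nuMeasure_ac : nuMeasure (μ := μ) (φ₀ := φ₀) h hL ≪ μ := by
  intro s hs
  obtain ⟨t, hst, htm, ht0⟩ := exists_measurable_superset_of_null hs
  have htzero : L ⟨indF t, memLinf_indF htm⟩ ≤ 0 := by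
    refine (L_le_phi h hL _).trans ?_
    have heq : indF t =ᵐ[μ] (0 : Ω → ℝ) := by
      have : ∀ᵐ ω ∂μ, ω ∉ t := by
        rw [← measure_eq_zero_iff_ae_notMem] at *
        exact ht0
      filter_upwards [this] with ω hω
      simp [indF, Set.indicator_apply, hω]
    rw [h.mc.congr (indF t) 0 (memLinf_indF htm) memLinf_zero heq, h.zero]
  have hνt : nuMeasure (μ := μ) (φ₀ := φ₀) h hL t = 0 := by
    rw [nuMeasure_apply h hL htm]
    exact ENNReal.ofReal_eq_zero.mpr htzero
  exact le_antisymm (hνt ▸ measure_mono hst) (by simp)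

/-- The density `Z₀` of the measure `ν` with respect to `μ`. -/
def densZ : Ω → ℝ :=
  fun ω => ((nuMeasure (μ := μ) (φ₀ := φ₀) h hL).rnDeriv μ ω).toReal

lemma densZ_nonneg (ω : Ω) : 0 ≤ densZ (μ := μ) (φ₀ := φ₀) h hL ω := ENNReal.toReal_nonneg

lemma densZ_integrable [IsFiniteMeasure μ] : Integrable (densZ (μ := μ) (φ₀ := φ₀) h hL) μ := by
  haveI := nuMeasure_finite h hL
  exact Measure.integrable_toReal_rnDeriv

lemma densZ_setIntegral [IsFiniteMeasure μ] {A : Set Ω} (hA : MeasurableSet A) :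
    ∫ ω in A, densZ (μ := μ) (φ₀ := φ₀) h hL ω ∂μ
      = ((nuMeasure (μ := μ) (φ₀ := φ₀) h hL) A).toReal := by
  haveI := nuMeasure_finite h hL
  exact Measure.setIntegral_toReal_rnDeriv (nuMeasure_ac h hL) A

lemma densZ_ind_integral [IsFiniteMeasure μ] {A : Set Ω} (hA : MeasurableSet A) :
    ∫ ω, indF A ω * densZ (μ := μ) (φ₀ := φ₀) h hL ω ∂μ
      = L ⟨indF A, memLinf_indF hA⟩ := by
  have h1 : (fun ω => indF A ω * densZ (μ := μ) (φ₀ := φ₀) h hL ω)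
      = Set.indicator A (densZ (μ := μ) (φ₀ := φ₀) h hL) := by
    funext ω
    by_cases hω : ω ∈ A <;> simp [indF, Set.indicator_apply, hω]
  rw [h1, integral_indicator hA, densZ_setIntegral h hL hA, nuMeasure_apply h hL hA,
    ENNReal.toReal_ofReal]
  exact L_nonneg h hL (Filter.Eventually.of_forall fun ω => indF_nonneg _ ω)

omit h hL in
lemma memLinf_simpleFunc (f : SimpleFunc Ω ℝ) : MemLinf μ ⇑f := by
  obtain ⟨C, hC⟩ := f.exists_forall_norm_le
  exact memLinf_of_bound f.stronglyMeasurable.aestronglyMeasurable C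
    (Filter.Eventually.of_forall fun ω => by simpa [Real.norm_eq_abs] using hC ω)

lemma densZ_simple_integral [IsFiniteMeasure μ] (f : SimpleFunc Ω ℝ) :
    Integrable (fun ω => f ω * densZ (μ := μ) (φ₀ := φ₀) h hL ω) μ ∧
    ∀ hm : MemLinf μ ⇑f,
      ∫ ω, f ω * densZ (μ := μ) (φ₀ := φ₀) h hL ω ∂μ = L ⟨⇑f, hm⟩ := by
  induction f using SimpleFunc.induction with
  | @const c s hs =>
    have hcoe : ⇑(SimpleFunc.piecewise s hs (SimpleFunc.const Ω c) (SimpleFunc.const Ω 0))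
        = fun ω => c * indF s ω := by
      funext ω
      by_cases hω : ω ∈ s <;>
        simp [SimpleFunc.piecewise_apply, indF, Set.indicator_apply, hω]
    constructor
    · rw [hcoe]
      have : (fun ω => (c * indF s ω) * densZ (μ := μ) (φ₀ := φ₀) h hL ω)
          = fun ω => c * (Set.indicator s (densZ (μ := μ) (φ₀ := φ₀) h hL) ω) := by
        funext ω
        by_cases hω : ω ∈ s <;> simp [indF, Set.indicator_apply, hω]
      rw [this]
      exact ((densZ_integrable h hL).indicator hs).const_mul c
    · intro hm
      have hint : (fun ω => (SimpleFunc.piecewise s hs (SimpleFunc.const Ω c)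
          (SimpleFunc.const Ω 0)) ω * densZ (μ := μ) (φ₀ := φ₀) h hL ω)
          = fun ω => c * (indF s ω * densZ (μ := μ) (φ₀ := φ₀) h hL ω) := by
        funext ω
        by_cases hω : ω ∈ s <;>
          simp [SimpleFunc.piecewise_apply, indF, Set.indicator_apply, hω]
      rw [hint, integral_const_mul, densZ_ind_integral h hL hs]
      have hx : (⟨⇑(SimpleFunc.piecewise s hs (SimpleFunc.const Ω c) (SimpleFunc.const Ω 0)), hm⟩ : ↥(linfSub μ))
          = c • ⟨indF s, memLinf_indF hs⟩ := by
        apply Subtype.ext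
        show ⇑(SimpleFunc.piecewise s hs (SimpleFunc.const Ω c) (SimpleFunc.const Ω 0))
          = c • indF s
        rw [hcoe]
        funext ω
        simp [Pi.smul_apply, smul_eq_mul]
      rw [hx, LinearMap.map_smul, smul_eq_mul]
  | @add f g hfg ihf ihg =>
    have hco : ⇑(f + g) = fun ω => f ω + g ω := by
      funext ω; simp
    have hsplit : (fun ω => (f + g) ω * densZ (μ := μ) (φ₀ := φ₀) h hL ω)
        = fun ω => f ω * densZ (μ := μ) (φ₀ := φ₀) h hL ω
            + g ω * densZ (μ := μ) (φ₀ := φ₀) h hL ω := by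
      funext ω
      simp [add_mul]
    constructor
    · rw [hsplit]; exact ihf.1.add ihg.1
    · intro hm
      rw [hsplit, integral_add ihf.1 ihg.1, ihf.2 (memLinf_simpleFunc f),
        ihg.2 (memLinf_simpleFunc g)]
      have hx : (⟨⇑(f + g), hm⟩ : ↥(linfSub μ))
          = ⟨⇑f, memLinf_simpleFunc f⟩ + ⟨⇑g, memLinf_simpleFunc g⟩ := by
        apply Subtype.ext
        show ⇑(f + g) = ⇑f + ⇑g
        funext ω; simp
      rw [hx, map_add]

/-- The key inequality: `∫ X Z₀ ≤ φ₀(X)` for all `X ∈ L^∞`. -/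
lemma densZ_key [IsFiniteMeasure μ] {X : Ω → ℝ} (hX : MemLinf μ X) :
    ∫ ω, X ω * densZ (μ := μ) (φ₀ := φ₀) h hL ω ∂μ ≤ φ₀ X := by
  set Z := densZ (μ := μ) (φ₀ := φ₀) h hL with hZdef
  set C := (eLpNormEssSup X μ).toReal with hCdef
  have hC0 : 0 ≤ C := ENNReal.toReal_nonneg
  have hbd := hX.bound
  set X' := hX.1.mk X with hX'def
  have hX'meas : Measurable X' := hX.1.stronglyMeasurable_mk.measurable
  have hXX' : X =ᵐ[μ] X' := hX.1.ae_eq_mk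
  set X'' := fun ω => max (min (X' ω) C) (-C) with hX''def
  have hX''meas : Measurable X'' := (hX'meas.min measurable_const).max measurable_const
  have hX''bd : ∀ ω, |X'' ω| ≤ C := by
    intro ω
    rw [abs_le]
    constructor
    · exact le_max_right _ _
    · exact max_le (min_le_right _ _) (by linarith)
  have hXX'' : X =ᵐ[μ] X'' := by
    filter_upwards [hXX', hbd] with ω h1 h2
    rw [abs_le] at h2
    rw [hX''def]
    simp only
    rw [← h1, min_eq_left h2.2, max_eq_left h2.1]
  have hmemX'' : MemLinf μ X'' :=
    memLinf_of_bound hX''meas.aestronglyMeasurable C (Filter.Eventually.of_forall hX''bd)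
  set fs := fun n => SimpleFunc.approxOn X'' hX''meas Set.univ 0 (Set.mem_univ 0) n with hfsdef
  have hfs_tendsto : ∀ ω, Tendsto (fun n => fs n ω) atTop (𝓝 (X'' ω)) := fun ω =>
    SimpleFunc.tendsto_approxOn hX''meas (Set.mem_univ 0) (by simp)
  have hfs_bd : ∀ n ω, |fs n ω| ≤ C + C := by
    intro n ω
    have h1 := SimpleFunc.norm_approxOn_zero_le hX''meas (Set.mem_univ 0) ω n
    rw [Real.norm_eq_abs, Real.norm_eq_abs] at h1
    exact h1.trans (add_le_add (hX''bd ω) (hX''bd ω))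
  have hfs_le : ∀ n, ∫ ω, fs n ω * Z ω ∂μ ≤ φ₀ ⇑(fs n) := by
    intro n
    rw [(densZ_simple_integral h hL (fs n)).2 (memLinf_simpleFunc _)]
    exact L_le_phi h hL _
  have hT1 : Tendsto (fun n => ∫ ω, fs n ω * Z ω ∂μ) atTop (𝓝 (∫ ω, X'' ω * Z ω ∂μ)) := by
    refine tendsto_integral_of_dominated_convergence (fun ω => (C + C) * |Z ω|)
      (fun n => ((fs n).stronglyMeasurable.aestronglyMeasurable.mul
        (densZ_integrable h hL).1)) ?_ ?_ ?_
    · exact ((densZ_integrable h hL).abs).const_mul (C + C)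
    · intro n
      refine Filter.Eventually.of_forall fun ω => ?_
      rw [Real.norm_eq_abs, abs_mul]
      exact mul_le_mul_of_nonneg_right (hfs_bd n ω) (abs_nonneg _)
    · exact Filter.Eventually.of_forall fun ω => (hfs_tendsto ω).mul_const _
  have hT2 : Tendsto (fun n => φ₀ ⇑(fs n)) atTop (𝓝 (φ₀ X'')) :=
    h.leb (fun n => ⇑(fs n)) X'' (fun n => memLinf_simpleFunc _) hmemX''
      ⟨C + C, fun n => Filter.Eventually.of_forall fun ω => hfs_bd n ω⟩
      (Filter.Eventually.of_forall fun ω => hfs_tendsto ω)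
  have hfin : ∫ ω, X'' ω * Z ω ∂μ ≤ φ₀ X'' :=
    le_of_tendsto_of_tendsto' hT1 hT2 hfs_le
  have he1 : ∫ ω, X ω * Z ω ∂μ = ∫ ω, X'' ω * Z ω ∂μ :=
    integral_congr_ae (hXX''.mono fun ω hω => by simp only []; rw [hω])
  have he2 : φ₀ X'' = φ₀ X := h.mc.congr X'' X hmemX'' hX hXX''.symm
  rw [he1, ← he2]
  exact hfin

end L


lemma conj_nonneg (hz : φ₀ 0 = 0) (Z : Ω → ℝ) : (0 : EReal) ≤ conj μ φ₀ Z := by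
  have h0 : (∫ ω, (0:Ω → ℝ) ω * Z ω ∂μ) = 0 := by simp
  refine le_trans (le_of_eq ?_) (le_iSup (fun X : {X : Ω → ℝ // MemLinf μ X} =>
    (((∫ ω, X.1 ω * Z ω ∂μ) - φ₀ X.1 : ℝ) : EReal)) ⟨0, memLinf_zero⟩)
  simp [h0, hz]

lemma exists_goodZ (h : Standing μ φ₀) [IsFiniteMeasure μ] :
    ∃ Z : Ω → ℝ, MemDom μ φ₀ Z ∧ (∀ ω, 0 ≤ Z ω) ∧ conj μ φ₀ Z = 0 := by
  obtain ⟨L, hL⟩ := exists_linear h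
  have hle : conj μ φ₀ (densZ (μ := μ) (φ₀ := φ₀) h hL) ≤ 0 := by
    refine iSup_le ?_
    rintro ⟨X, hX⟩
    have hk := densZ_key h hL hX
    exact_mod_cast EReal.coe_nonpos.mpr (sub_nonpos.mpr hk)
  have heq : conj μ φ₀ (densZ (μ := μ) (φ₀ := φ₀) h hL) = 0 :=
    le_antisymm hle (conj_nonneg h.zero _)
  exact ⟨densZ (μ := μ) (φ₀ := φ₀) h hL,
    ⟨densZ_integrable h hL, by
      rw [heq]
      exact EReal.coe_zero ▸ EReal.coe_lt_top 0⟩,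
    densZ_nonneg h hL, heq⟩

lemma ereal_sub_zero (x : EReal) : x - (0:EReal) = x := by
  induction x using EReal.rec <;> simp [sub_eq_add_neg]

lemma ereal_sub_coe_add (x : EReal) (c : ℝ) : x - (c:EReal) + (c:EReal) = x := by
  induction x using EReal.rec
  · simp [sub_eq_add_neg]
  · norm_cast; ring
  · simp [sub_eq_add_neg, EReal.top_add_coe]

lemma ennreal_coe_toEReal {x : ℝ≥0∞} (hx : x ≠ ⊤) : ((x.toReal : ℝ) : EReal) = (x : EReal) := by
  lift x to NNReal using hx
  rw [ENNReal.coe_toReal]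
  norm_cast

lemma eE_of_ae_nonneg {f : Ω → ℝ} (hf : 0 ≤ᵐ[μ] f) :
    eE μ f = ((∫⁻ ω, ENNReal.ofReal (f ω) ∂μ : ℝ≥0∞) : EReal) := by
  have hneg : ∫⁻ ω, ENNReal.ofReal (-f ω) ∂μ = 0 := by
    have he : (fun ω => ENNReal.ofReal (-f ω)) =ᵐ[μ] (fun _ => 0) := by
      filter_upwards [hf] with ω hω
      have h0 : (0:ℝ) ≤ f ω := hω
      simp [ENNReal.ofReal_eq_zero.mpr (by linarith : -f ω ≤ 0)]
    rw [lintegral_congr_ae he, lintegral_zero]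
  rw [eE, hneg]
  show _ - ((0:ℝ≥0∞):EReal) = _
  rw [EReal.coe_ennreal_zero, ereal_sub_zero]

lemma eE_of_integrable {f : Ω → ℝ} (hf : Integrable f μ) :
    eE μ f = ((∫ ω, f ω ∂μ : ℝ) : EReal) := by
  have hfin : ∫⁻ a, (‖f a‖₊ : ℝ≥0∞) ∂μ ≠ ⊤ := hf.2.ne
  have hp : ∫⁻ ω, ENNReal.ofReal (f ω) ∂μ ≠ ⊤ := by
    refine ne_top_of_le_ne_top hfin (lintegral_mono fun ω => ?_)
    exact Real.ofReal_le_enorm _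
  have hn : ∫⁻ ω, ENNReal.ofReal (-f ω) ∂μ ≠ ⊤ := by
    refine ne_top_of_le_ne_top hfin (lintegral_mono fun ω => ?_)
    exact (Real.ofReal_le_enorm _).trans (by simp)
  rw [eE, ← ennreal_coe_toEReal hp, ← ennreal_coe_toEReal hn,
    integral_eq_lintegral_pos_part_sub_lintegral_neg_part hf]
  norm_cast

lemma eE_congr {f g : Ω → ℝ} (hfg : f =ᵐ[μ] g) : eE μ f = eE μ g := by
  have h1 : ∫⁻ ω, ENNReal.ofReal (f ω) ∂μ = ∫⁻ ω, ENNReal.ofReal (g ω) ∂μ :=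
    lintegral_congr_ae (hfg.mono fun ω hω => by simp only [hω])
  have h2 : ∫⁻ ω, ENNReal.ofReal (-f ω) ∂μ = ∫⁻ ω, ENNReal.ofReal (-g ω) ∂μ :=
    lintegral_congr_ae (hfg.mono fun ω hω => by simp only [hω])
  rw [eE, eE, h1, h2]

lemma conj_coe (h : Standing μ φ₀) {Z : Ω → ℝ} (hZ : MemDom μ φ₀ Z) :
    ∃ c : ℝ, 0 ≤ c ∧ conj μ φ₀ Z = (c : EReal) := by
  have h0 := conj_nonneg (μ := μ) h.zero Z
  have hnb : conj μ φ₀ Z ≠ ⊥ := fun hb => by rw [hb] at h0; exact absurd h0 (by simp)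
  have hco := EReal.coe_toReal hZ.2.ne hnb
  refine ⟨_, ?_, hco.symm⟩
  rw [← hco] at h0
  exact_mod_cast h0

lemma dom_nonneg (h : Standing μ φ₀) {Z : Ω → ℝ} (hZ : MemDom μ φ₀ Z) :
    0 ≤ᵐ[μ] Z := by
  obtain ⟨c, hc0, hc⟩ := conj_coe h hZ
  set Z' := hZ.1.1.mk Z with hZ'def
  have hZ'meas : Measurable Z' := hZ.1.1.stronglyMeasurable_mk.measurable
  have hZZ' : Z =ᵐ[μ] Z' := hZ.1.1.ae_eq_mk
  set B := {ω | Z' ω < 0} with hBdef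
  have hB : MeasurableSet B := measurableSet_lt hZ'meas measurable_const
  set I := ∫ ω in B, -Z ω ∂μ with hIdef
  have hae : 0 ≤ᵐ[μ.restrict B] fun ω => -Z ω := by
    refine (ae_restrict_iff' hB).2 ?_
    filter_upwards [hZZ'] with ω hω hmem
    have hlt : Z' ω < 0 := hmem
    show (0:ℝ) ≤ -Z ω
    rw [hω]
    linarith
  have hInn : 0 ≤ I := integral_nonneg_of_ae hae
  have hbound : ∀ t : ℝ, 0 < t → t * I ≤ c := by
    intro t ht
    have hmemX : MemLinf μ (fun ω => -t * indF B ω) := (memLinf_indF hB).const_mul (-t)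
    have hterm := le_iSup (fun X : {X : Ω → ℝ // MemLinf μ X} =>
      (((∫ ω, X.1 ω * Z ω ∂μ) - φ₀ X.1 : ℝ) : EReal)) ⟨fun ω => -t * indF B ω, hmemX⟩
    replace hterm := le_trans hterm hc.le
    have hfn : (fun ω => (-t * indF B ω) * Z ω)
        = fun ω => -t * (Set.indicator B Z ω) := by
      funext ω
      by_cases hω : ω ∈ B <;> simp [indF, Set.indicator_apply, hω]
    have hint : ∫ ω, (-t * indF B ω) * Z ω ∂μ = t * I := by
      rw [hfn, integral_const_mul, integral_indicator hB]
      have : I = -∫ ω in B, Z ω ∂μ := by rw [hIdef, integral_neg]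
      rw [this]
      ring
    have hphile : φ₀ (fun ω => -t * indF B ω) ≤ 0 := by
      have hm := h.mc.mono _ 0 hmemX memLinf_zero
        (Filter.Eventually.of_forall fun ω => by
          have := indF_nonneg B ω
          show -t * indF B ω ≤ (0:Ω → ℝ) ω
          rw [Pi.zero_apply]
          nlinarith)
      rwa [h.zero] at hm
    have hre : (∫ ω, (-t * indF B ω) * Z ω ∂μ)
        - φ₀ (fun ω' => -t * indF B ω') ≤ c := by exact_mod_cast hterm
    rw [hint] at hre
    linarith
  have hI0 : I ≤ 0 := by
    by_contra hpos
    push_neg at hpos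
    have hb := hbound ((c+1)/I) (by positivity)
    rw [div_mul_cancel₀ _ (ne_of_gt hpos)] at hb
    linarith
  have hIeq : I = 0 := le_antisymm hI0 hInn
  have hint2 : Integrable (fun ω => -Z ω) (μ.restrict B) := (hZ.1.restrict).neg
  have hzero := (integral_eq_zero_iff_of_nonneg_ae hae hint2).mp hIeq
  have hfalse : ∀ᵐ ω ∂(μ.restrict B), False := by
    filter_upwards [hzero, ae_restrict_mem hB, ae_restrict_of_ae hZZ'] with ω h1 h2 h3
    have hzω : -Z ω = 0 := h1
    have hltω : Z' ω < 0 := h2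
    rw [h3] at hzω
    linarith
  have hB0 : μ B = 0 := by
    have hu : μ.restrict B Set.univ = 0 := by
      rw [ae_iff] at hfalse
      simpa using hfalse
    simpa [Measure.restrict_apply_univ] using hu
  filter_upwards [hZZ', (measure_eq_zero_iff_ae_notMem).mp hB0] with ω h1 h2
  have hnlt : ¬ Z' ω < 0 := h2
  show (0:ℝ) ≤ Z ω
  rw [h1]
  linarith


lemma hatphi_congr {f g : Ω → ℝ} (hfg : f =ᵐ[μ] g) :
    hatphi μ φ₀ f = hatphi μ φ₀ g := by
  unfold hatphi
  refine iSup_congr fun Z => ?_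
  rw [eE_congr (show (fun ω => f ω * Z.1 ω) =ᵐ[μ] fun ω => g ω * Z.1 ω from
    hfg.mono fun ω hω => by simp only [hω])]

lemma term_le (T : Ω → ℝ) (Z : {Z : Ω → ℝ // MemDom μ φ₀ Z}) :
    eE μ (fun ω => T ω * Z.1 ω) - conj μ φ₀ Z.1 ≤ hatphi μ φ₀ T :=
  le_iSup (fun Z : {Z : Ω → ℝ // MemDom μ φ₀ Z} =>
    eE μ (fun ω => T ω * Z.1 ω) - conj μ φ₀ Z.1) Z

lemma bound_of_le_one (h : Standing μ φ₀) {T Z : Ω → ℝ} (hT0 : ∀ ω, 0 ≤ T ω)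
    (hZdom : MemDom μ φ₀ Z) (h1 : hatphi μ φ₀ T ≤ 1) {c : ℝ} (hc0 : 0 ≤ c)
    (hc : conj μ φ₀ Z = (c : EReal)) :
    ∫⁻ ω, ENNReal.ofReal (T ω * Z ω) ∂μ ≤ ENNReal.ofReal (1 + c) := by
  have hZnn := dom_nonneg h hZdom
  have hprod : 0 ≤ᵐ[μ] fun ω => T ω * Z ω := by
    filter_upwards [hZnn] with ω hω
    exact mul_nonneg (hT0 ω) hω
  have hterm := term_le T ⟨Z, hZdom⟩
  rw [eE_of_ae_nonneg hprod, hc] at hterm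
  have hle1 : ((∫⁻ ω, ENNReal.ofReal (T ω * Z ω) ∂μ : ℝ≥0∞) : EReal) - (c:EReal) ≤ 1 :=
    le_trans hterm h1
  have hle2 : ((∫⁻ ω, ENNReal.ofReal (T ω * Z ω) ∂μ : ℝ≥0∞) : EReal)
      ≤ ((1 + c : ℝ) : EReal) := by
    have hadd := add_le_add_left hle1 (c : EReal)
    rw [ereal_sub_coe_add] at hadd
    refine hadd.trans (le_of_eq ?_)
    norm_cast
  rw [show ((1 + c : ℝ) : EReal) = ((ENNReal.ofReal (1 + c) : ℝ≥0∞) : EReal) by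
      rw [EReal.coe_ennreal_ofReal, max_eq_left (by linarith)]] at hle2
  exact EReal.coe_ennreal_le_coe_ennreal_iff.mp hle2

lemma term_le_of_bound {A : ℝ≥0∞} {c l : ℝ} (hc0 : 0 ≤ c) (hl0 : 0 ≤ l)
    (hA : A ≤ ENNReal.ofReal (l + c)) :
    (A : EReal) - (c : EReal) ≤ (l : EReal) := by
  have h1 : (A : EReal) ≤ ((l + c : ℝ) : EReal) := by
    refine le_trans (EReal.coe_ennreal_le_coe_ennreal_iff.mpr hA) (le_of_eq ?_)
    rw [EReal.coe_ennreal_ofReal, max_eq_left (by linarith)]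
  have h2 := EReal.sub_le_sub h1 (le_refl (c : EReal))
  refine h2.trans (le_of_eq ?_)
  norm_cast
  ring

lemma hatphi_le_one_of (h : Standing μ φ₀) {W U V : Ω → ℝ}
    (hW0 : ∀ ω, 0 ≤ W ω) (hU0 : ∀ ω, 0 ≤ U ω) (hV0 : ∀ ω, 0 ≤ V ω)
    (hUm : AEMeasurable U μ) (hVm : AEMeasurable V μ)
    (hWle : ∀ ω, W ω ≤ (U ω + V ω) / 2)
    (hU1 : hatphi μ φ₀ U ≤ 1) (hV1 : hatphi μ φ₀ V ≤ 1) :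
    hatphi μ φ₀ W ≤ 1 := by
  refine iSup_le ?_
  rintro ⟨Z, hZdom⟩
  obtain ⟨c, hc0, hc⟩ := conj_coe h hZdom
  have hZnn := dom_nonneg h hZdom
  have hZm : AEMeasurable Z μ := hZdom.1.1.aemeasurable
  have hAU := bound_of_le_one h hU0 hZdom hU1 hc0 hc
  have hAV := bound_of_le_one h hV0 hZdom hV1 hc0 hc
  have hprodW : 0 ≤ᵐ[μ] fun ω => W ω * Z ω := by
    filter_upwards [hZnn] with ω hω; exact mul_nonneg (hW0 ω) hω
  have hmono : ∫⁻ ω, ENNReal.ofReal (W ω * Z ω) ∂μ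
      ≤ ∫⁻ ω, (ENNReal.ofReal (2⁻¹)
          * (ENNReal.ofReal (U ω * Z ω) + ENNReal.ofReal (V ω * Z ω))) ∂μ := by
    refine lintegral_mono_ae ?_
    filter_upwards [hZnn] with ω hω
    have h1 : W ω * Z ω ≤ 2⁻¹ * (U ω * Z ω + V ω * Z ω) := by
      have h2 := mul_le_mul_of_nonneg_right (hWle ω) hω
      nlinarith
    calc ENNReal.ofReal (W ω * Z ω)
        ≤ ENNReal.ofReal (2⁻¹ * (U ω * Z ω + V ω * Z ω)) := ENNReal.ofReal_le_ofReal h1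
      _ = ENNReal.ofReal (2⁻¹)
          * (ENNReal.ofReal (U ω * Z ω) + ENNReal.ofReal (V ω * Z ω)) := by
          rw [ENNReal.ofReal_mul (by norm_num),
            ENNReal.ofReal_add (mul_nonneg (hU0 ω) hω) (mul_nonneg (hV0 ω) hω)]
  have hUZm : AEMeasurable (fun ω => ENNReal.ofReal (U ω * Z ω)) μ :=
    (hUm.mul hZm).ennreal_ofReal
  have hcalc : ∫⁻ ω, (ENNReal.ofReal (2⁻¹)
        * (ENNReal.ofReal (U ω * Z ω) + ENNReal.ofReal (V ω * Z ω))) ∂μ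
      = ENNReal.ofReal (2⁻¹) * ((∫⁻ ω, ENNReal.ofReal (U ω * Z ω) ∂μ)
          + ∫⁻ ω, ENNReal.ofReal (V ω * Z ω) ∂μ) := by
    rw [lintegral_const_mul' _ _ ENNReal.ofReal_ne_top, lintegral_add_left' hUZm]
  have hfinal : ∫⁻ ω, ENNReal.ofReal (W ω * Z ω) ∂μ ≤ ENNReal.ofReal (1 + c) := by
    refine hmono.trans ?_
    rw [hcalc]
    calc ENNReal.ofReal (2⁻¹) * ((∫⁻ ω, ENNReal.ofReal (U ω * Z ω) ∂μ)
          + ∫⁻ ω, ENNReal.ofReal (V ω * Z ω) ∂μ)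
        ≤ ENNReal.ofReal (2⁻¹) * (ENNReal.ofReal (1 + c) + ENNReal.ofReal (1 + c)) :=
          mul_le_mul_right (add_le_add hAU hAV) _
      _ = ENNReal.ofReal (1 + c) := by
          rw [← ENNReal.ofReal_add (by linarith) (by linarith),
            ← ENNReal.ofReal_mul (by norm_num)]
          congr 1
          ring
  rw [eE_of_ae_nonneg hprodW, hc]
  have hfin2 := term_le_of_bound hc0 zero_le_one hfinal
  refine hfin2.trans (le_of_eq ?_)
  norm_cast

lemma hatphi_smul_le (h : Standing μ φ₀) {V : Ω → ℝ} (hV0 : ∀ ω, 0 ≤ V ω)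
    (hV1 : hatphi μ φ₀ V ≤ 1) {l : ℝ} (hl0 : 0 < l) (hl1 : l ≤ 1) :
    hatphi μ φ₀ (fun ω => l * V ω) ≤ (l : EReal) := by
  refine iSup_le ?_
  rintro ⟨Z, hZdom⟩
  obtain ⟨c, hc0, hc⟩ := conj_coe h hZdom
  have hZnn := dom_nonneg h hZdom
  have hAV := bound_of_le_one h hV0 hZdom hV1 hc0 hc
  have hprod : 0 ≤ᵐ[μ] fun ω => (l * V ω) * Z ω := by
    filter_upwards [hZnn] with ω hω
    exact mul_nonneg (mul_nonneg hl0.le (hV0 ω)) hω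
  have heq : ∫⁻ ω, ENNReal.ofReal ((l * V ω) * Z ω) ∂μ
      = ENNReal.ofReal l * ∫⁻ ω, ENNReal.ofReal (V ω * Z ω) ∂μ := by
    rw [← lintegral_const_mul' _ _ ENNReal.ofReal_ne_top]
    refine lintegral_congr fun ω => ?_
    rw [← ENNReal.ofReal_mul hl0.le, mul_assoc]
  have hbound : ∫⁻ ω, ENNReal.ofReal ((l * V ω) * Z ω) ∂μ ≤ ENNReal.ofReal (l + c) := by
    rw [heq]
    calc ENNReal.ofReal l * ∫⁻ ω, ENNReal.ofReal (V ω * Z ω) ∂μ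
        ≤ ENNReal.ofReal l * ENNReal.ofReal (1 + c) := mul_le_mul_right hAV _
      _ = ENNReal.ofReal (l * (1 + c)) := (ENNReal.ofReal_mul hl0.le).symm
      _ ≤ ENNReal.ofReal (l + c) := ENNReal.ofReal_le_ofReal (by nlinarith)
  rw [eE_of_ae_nonneg hprod, hc]
  exact term_le_of_bound hc0 hl0.le hbound

lemma hatphi_nonneg (h : Standing μ φ₀) [IsFiniteMeasure μ] {T : Ω → ℝ}
    (hT0 : ∀ ω, 0 ≤ T ω) : (0:EReal) ≤ hatphi μ φ₀ T := by
  obtain ⟨Z, hZdom, hZnn, hZconj⟩ := exists_goodZ h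
  refine le_trans ?_ (term_le T ⟨Z, hZdom⟩)
  have hprod : 0 ≤ᵐ[μ] fun ω => T ω * Z ω :=
    Filter.Eventually.of_forall fun ω => mul_nonneg (hT0 ω) (hZnn ω)
  rw [eE_of_ae_nonneg hprod, hZconj, ereal_sub_zero]
  exact EReal.coe_ennreal_nonneg _

lemma hatphi_le_phi0 (h : Standing μ φ₀) {T : Ω → ℝ} (hT : MemLinf μ T) :
    hatphi μ φ₀ T ≤ ((φ₀ T : ℝ) : EReal) := by
  refine iSup_le ?_
  rintro ⟨Z, hZdom⟩
  have hbd := hT.bound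
  have hTZ : Integrable (fun ω => T ω * Z ω) μ := by
    refine Integrable.mono' ((hZdom.1.norm.const_mul ((eLpNormEssSup T μ).toReal)))
      (hT.1.mul hZdom.1.1) ?_
    filter_upwards [hbd] with ω hω
    rw [Real.norm_eq_abs, abs_mul]
    exact mul_le_mul_of_nonneg_right hω (abs_nonneg _)
  rw [eE_of_integrable hTZ]
  have hconj_ge : (((∫ ω, T ω * Z ω ∂μ) - φ₀ T : ℝ) : EReal) ≤ conj μ φ₀ Z :=
    le_iSup (fun X : {X : Ω → ℝ // MemLinf μ X} =>
      (((∫ ω, X.1 ω * Z ω ∂μ) - φ₀ X.1 : ℝ) : EReal)) ⟨T, hT⟩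
  have step := EReal.sub_le_sub (le_refl ((∫ ω, T ω * Z ω ∂μ : ℝ) : EReal)) hconj_ge
  refine step.trans (le_of_eq ?_)
  norm_cast
  ring

lemma gauge_nonneg (Y : Ω → ℝ) : (0:EReal) ≤ gauge μ φ₀ Y := by
  refine le_sInf ?_
  rintro l ⟨r, hr, rfl, -⟩
  exact_mod_cast hr.le

lemma gauge_le {Y : Ω → ℝ} {r : ℝ} (hr : 0 < r)
    (h1 : hatphi μ φ₀ (fun ω => |Y ω| / r) ≤ 1) : gauge μ φ₀ Y ≤ (r : EReal) :=
  sInf_le ⟨r, hr, rfl, h1⟩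

lemma exists_of_gauge_lt {Y : Ω → ℝ} {r : ℝ} (hlt : gauge μ φ₀ Y < (r : EReal)) :
    ∃ r' : ℝ, 0 < r' ∧ r' < r ∧ hatphi μ φ₀ (fun ω => |Y ω| / r') ≤ 1 := by
  obtain ⟨l, hmem, hl⟩ := sInf_lt_iff.mp hlt
  obtain ⟨r', hr', rfl, h1⟩ := hmem
  exact ⟨r', hr', by exact_mod_cast hl, h1⟩

lemma gauge_congr {f g : Ω → ℝ} (hfg : f =ᵐ[μ] g) : gauge μ φ₀ f = gauge μ φ₀ g := by
  unfold gauge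
  congr 1
  ext l
  constructor
  · rintro ⟨r, hr, rfl, h1⟩
    exact ⟨r, hr, rfl, by
      rwa [hatphi_congr (μ := μ) (φ₀ := φ₀)
        (show (fun ω => |f ω| / r) =ᵐ[μ] fun ω => |g ω| / r from
          hfg.mono fun ω hω => by simp only [hω])] at h1⟩
  · rintro ⟨r, hr, rfl, h1⟩
    exact ⟨r, hr, rfl, by
      rwa [hatphi_congr (μ := μ) (φ₀ := φ₀)
        (show (fun ω => |g ω| / r) =ᵐ[μ] fun ω => |f ω| / r from
          hfg.symm.mono fun ω hω => by simp only [hω])] at h1⟩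

lemma tendsto_zero_ereal {f : ℕ → EReal} (h0 : ∀ n, (0:EReal) ≤ f n)
    (hev : ∀ r : ℝ, 0 < r → ∀ᶠ n in atTop, f n ≤ (r : EReal)) :
    Tendsto f atTop (𝓝 (0 : EReal)) := by
  rw [tendsto_order]
  constructor
  · intro a ha
    exact Filter.Eventually.of_forall fun n => lt_of_lt_of_le ha (h0 n)
  · intro b hb
    obtain ⟨δ, hδ0, hδb⟩ := EReal.exists_between_coe_real hb
    have hδ0' : (0:ℝ) < δ := by exact_mod_cast hδ0
    filter_upwards [hev δ hδ0'] with n hn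
    exact lt_of_le_of_lt hn hδb

lemma phi0_ind_tendsto (h : Standing μ φ₀) (c : ℝ)
    {A : ℕ → Set Ω} (hA : ∀ n, MeasurableSet (A n))
    (h0 : Tendsto (fun n => μ (A n)) atTop (𝓝 0)) :
    Tendsto (fun n => φ₀ (fun ω => c * indF (A n) ω)) atTop (𝓝 0) := by
  apply tendsto_of_subseq_tendsto
  intro ns hns
  have hsub : Tendsto (fun k => μ (A (ns k))) atTop (𝓝 0) := h0.comp hns
  have hP : ∀ n : ℕ, ∀ᶠ k in atTop, μ (A (ns k)) < (2⁻¹ : ℝ≥0∞) ^ n := by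
    intro n
    refine hsub.eventually_lt_const ?_
    exact ENNReal.pow_pos (by norm_num) n
  obtain ⟨ms, hmono, hms⟩ := Filter.extraction_forall_of_eventually hP
  refine ⟨ms, ?_⟩
  have hgeo : (∑' n : ℕ, (2⁻¹ : ℝ≥0∞) ^ n) ≠ ⊤ := by
    simpa only [ENNReal.tsum_geometric, ENNReal.one_sub_inv_two, inv_inv] using
      ENNReal.ofNat_ne_top
  have hsum : (∑' k, μ (A (ns (ms k)))) ≠ ⊤ :=
    ne_top_of_le_ne_top hgeo (ENNReal.tsum_le_tsum fun k => (hms k).le)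
  have hBC := measure_setOf_frequently_eq_zero
    (μ := μ) (p := fun k ω => ω ∈ A (ns (ms k))) (by simpa using hsum)
  have hae : ∀ᵐ ω ∂μ, ∀ᶠ k in atTop, ω ∉ A (ns (ms k)) := by
    have hmem := (measure_eq_zero_iff_ae_notMem).mp hBC
    filter_upwards [hmem] with ω hω
    exact Filter.not_frequently.mp hω
  have hleb := h.leb (fun k => fun ω => c * indF (A (ns (ms k))) ω) 0
    (fun k => (memLinf_indF (hA _)).const_mul c) memLinf_zero
    ⟨|c|, fun k => Filter.Eventually.of_forall fun ω => by
      rw [abs_mul]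
      calc |c| * |indF (A (ns (ms k))) ω| ≤ |c| * 1 := by
            refine mul_le_mul_of_nonneg_left ?_ (abs_nonneg c)
            rw [abs_le]
            exact ⟨by linarith [indF_nonneg (A (ns (ms k))) ω], indF_le_one _ ω⟩
        _ = |c| := mul_one _⟩
    (by
      filter_upwards [hae] with ω hω
      have hev : ∀ᶠ k in atTop, c * indF (A (ns (ms k))) ω = 0 := by
        filter_upwards [hω] with k hk
        simp [indF, Set.indicator_apply, hk]
      rw [show (0:Ω→ℝ) ω = 0 from rfl]
      exact Tendsto.congr' (hev.mono fun k hk => hk.symm) tendsto_const_nhds)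
  rwa [h.zero] at hleb


end C

/-- characterization of `M^φ̂_u` via the gauge: `X ∈ M^φ̂_u` iff
`‖X 1_{{|X|>N}}‖_φ̂ → 0` iff `‖X 1_{A_n}‖_φ̂ → 0` whenever `ℙ(A_n) ↓ 0`. -/
theorem stmt10 (μ : Measure Ω) [IsProbabilityMeasure μ]
    (φ₀ : (Ω → ℝ) → ℝ) (h : Standing μ φ₀)
    (X : Ω → ℝ) (hX : AEStronglyMeasurable X μ) :
    List.TFAE
      [ MemMu μ φ₀ X,
        Tendsto (fun N : ℕ => gauge μ φ₀ (Set.indicator {ω | (N : ℝ) < |X ω|} X))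
          atTop (𝓝 (0 : EReal)),
        ∀ A : ℕ → Set Ω, (∀ n, MeasurableSet (A n)) →
          Antitone (fun n => μ (A n)) → Tendsto (fun n => μ (A n)) atTop (𝓝 0) →
          Tendsto (fun n => gauge μ φ₀ (Set.indicator (A n) X)) atTop (𝓝 (0 : EReal)) ] := by
  tfae_have 1 → 3
  · intro h1 A hAmeas hAanti hA0
    refine tendsto_zero_ereal (fun n => gauge_nonneg _) ?_
    intro r hr
    have hα : (0:ℝ) < 2 / r := by positivity
    have htail := (h1.2 (2/r) hα).eventually_lt_const (show (0:EReal) < 1 by norm_num)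
    obtain ⟨N₀, hN₀⟩ := htail.exists
    have hU1 : hatphi μ φ₀ (tailFn X (2/r) N₀) ≤ 1 := hN₀.le
    have hUm : AEMeasurable (tailFn X (2/r) N₀) μ := by
      have hX'meas : Measurable (hX.mk X) := hX.stronglyMeasurable_mk.measurable
      have hXX' : X =ᵐ[μ] hX.mk X := hX.ae_eq_mk
      have hmeas : Measurable (tailFn (hX.mk X) (2/r) N₀) := by
        have hset : MeasurableSet {ω | (N₀ : ℝ) < |hX.mk X ω|} :=
          measurableSet_lt measurable_const hX'meas.abs
        exact (measurable_const.mul hX'meas.abs).indicator hset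
      refine (aemeasurable_congr ?_).mpr hmeas.aemeasurable
      filter_upwards [hXX'] with ω hω
      simp [tailFn, Set.indicator_apply, hω]
    have hφV := phi0_ind_tendsto h (2*(N₀:ℝ)/r) hAmeas hA0
    have hVev : ∀ᶠ n in atTop,
        hatphi μ φ₀ (fun ω => (2*(N₀:ℝ)/r) * indF (A n) ω) ≤ 1 := by
      have hevlt := hφV.eventually_lt_const (show (0:ℝ) < 1 by norm_num)
      filter_upwards [hevlt] with n hn
      refine (hatphi_le_phi0 h ((memLinf_indF (hAmeas n)).const_mul _)).trans ?_
      exact_mod_cast hn.le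
    filter_upwards [hVev] with n hVn
    refine gauge_le hr ?_
    have hU0 : ∀ ω, 0 ≤ tailFn X (2/r) N₀ ω := fun ω =>
      Set.indicator_apply_nonneg fun _ => by positivity
    have hV0 : ∀ ω, 0 ≤ (2*(N₀:ℝ)/r) * indF (A n) ω := fun ω =>
      mul_nonneg (by positivity) (indF_nonneg _ ω)
    refine hatphi_le_one_of h (fun ω => div_nonneg (abs_nonneg _) hr.le) hU0 hV0 hUm
      ((measurable_const.indicator (hAmeas n)).const_mul (2*(N₀:ℝ)/r)).aemeasurable
      (fun ω => ?_) hU1 hVn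
    by_cases hωA : ω ∈ A n
    · rw [Set.indicator_of_mem hωA]
      by_cases hωN : ω ∈ {ω' | (N₀:ℝ) < |X ω'|}
      · have hU : tailFn X (2/r) N₀ ω = (2/r) * |X ω| := Set.indicator_of_mem hωN _
        rw [hU]
        have he : (2/r)*|X ω| = 2*(|X ω|/r) := by field_simp
        linarith [hV0 ω]
      · have hU : tailFn X (2/r) N₀ ω = 0 := Set.indicator_of_notMem hωN _
        have hV : (2*(N₀:ℝ)/r) * indF (A n) ω = 2*(N₀:ℝ)/r := by
          simp [indF, Set.indicator_apply, hωA]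
        rw [hU, hV]
        have hle : |X ω| ≤ (N₀:ℝ) := by
          have := hωN
          simp only [Set.mem_setOf_eq, not_lt] at this
          exact this
        have he : (0 + 2*(N₀:ℝ)/r)/2 = (N₀:ℝ)/r := by ring
        rw [he]
        gcongr
    · rw [Set.indicator_of_notMem hωA]
      simp only [abs_zero, zero_div]
      have := hU0 ω
      have := hV0 ω
      linarith
  tfae_have 3 → 2
  · intro h3
    have hX'meas : Measurable (hX.mk X) := hX.stronglyMeasurable_mk.measurable
    have hXX' : X =ᵐ[μ] hX.mk X := hX.ae_eq_mk
    set A := fun N : ℕ => {ω | (N:ℝ) < |hX.mk X ω|} with hAdef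
    have hAm : ∀ N, MeasurableSet (A N) := fun N =>
      measurableSet_lt measurable_const hX'meas.abs
    have hAsets : Antitone A := by
      intro m n hmn ω hω
      have h1 : ((m:ℝ)) ≤ ((n:ℝ)) := by exact_mod_cast hmn
      exact lt_of_le_of_lt h1 hω
    have hanti : Antitone fun N => μ (A N) := fun m n hmn => measure_mono (hAsets hmn)
    have hiI : ⋂ N, A N = ∅ := by
      ext ω
      simp only [Set.mem_iInter, Set.mem_empty_iff_false, iff_false, not_forall]
      obtain ⟨N, hN⟩ := exists_nat_gt |hX.mk X ω|
      exact ⟨N, by simp only [hAdef, Set.mem_setOf_eq, not_lt]; linarith⟩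
    have h0 : Tendsto (fun N => μ (A N)) atTop (𝓝 0) := by
      have ht := tendsto_measure_iInter_atTop (μ := μ) (s := A)
        (fun n => (hAm n).nullMeasurableSet) hAsets ⟨0, measure_ne_top μ _⟩
      rw [hiI] at ht
      simpa [Function.comp_def] using ht
    have hmain := h3 A hAm hanti h0
    refine Filter.Tendsto.congr (fun N => ?_) hmain
    refine gauge_congr ?_
    filter_upwards [hXX'] with ω hω
    simp [Set.indicator_apply, hAdef, Set.mem_setOf_eq, hω]
  tfae_have 2 → 1
  · intro h2
    refine ⟨hX, fun α hα => ?_⟩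
    refine tendsto_zero_ereal (fun N => hatphi_nonneg h (fun ω =>
      Set.indicator_apply_nonneg fun _ => mul_nonneg hα.le (abs_nonneg _))) ?_
    intro δ hδ
    set r := min (δ/α) (1/α) with hrdef
    have hrpos : 0 < r := lt_min (by positivity) (by positivity)
    have hev := h2.eventually_lt_const
      (show (0:EReal) < (r:EReal) by exact_mod_cast hrpos)
    filter_upwards [hev] with N hN
    obtain ⟨r', hr'0, hr'r, h1⟩ := exists_of_gauge_lt hN
    have hl0 : 0 < α * r' := mul_pos hα hr'0
    have hrle1 : r ≤ 1/α := min_le_right _ _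
    have hl1 : α * r' ≤ 1 := by
      calc α * r' ≤ α * r := by nlinarith
        _ ≤ α * (1/α) := by nlinarith
        _ = 1 := by field_simp
    have hrleδ : r ≤ δ/α := min_le_left _ _
    have hlδ : α * r' ≤ δ := by
      calc α * r' ≤ α * r := by nlinarith
        _ ≤ α * (δ/α) := by nlinarith
        _ = δ := by field_simp
    have harg : tailFn X α N
        = fun ω => (α * r') * (|Set.indicator {ω'' | (N:ℝ) < |X ω''|} X ω| / r') := by
      funext ω
      simp only [tailFn]
      by_cases hm : ω ∈ {ω'' | (N:ℝ) < |X ω''|}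
      · rw [Set.indicator_of_mem hm, Set.indicator_of_mem hm]
        field_simp
      · rw [Set.indicator_of_notMem hm, Set.indicator_of_notMem hm]
        simp
    rw [harg]
    refine (hatphi_smul_le h
      (V := fun ω => |Set.indicator {ω'' | (N:ℝ) < |X ω''|} X ω| / r')
      (fun ω => div_nonneg (abs_nonneg _) hr'0.le) h1 hl0 hl1).trans ?_
    exact_mod_cast hlδ
  tfae_finish


end MaxLebExt
end
end

section
/- Under the standing assumption, let U ∈ M^φ̂ with U ≥ 1 a.s., and define g_U(Z) = φ₀*(Z/U) = sup_{ξ ∈ L^∞}(𝔼[ξZ/U] − φ₀(ξ)) for Z ∈ L¹. Then g_U is coercive: lim_{‖Z‖₁ → ∞} g_U(Z)/‖Z‖₁ = +∞. -/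
open MeasureTheory Filter Topology
open scoped ENNReal

noncomputable section

namespace MaxLebExt

variable {Ω : Type*} [MeasurableSpace Ω]

private lemma le_conj_term (μ : Measure Ω) (φ₀ : (Ω → ℝ) → ℝ) (Z' : Ω → ℝ)
    {X : Ω → ℝ} (hX : MemLinf μ X) :
    (((∫ ω, X ω * Z' ω ∂μ) - φ₀ X : ℝ) : EReal) ≤ conj μ φ₀ Z' :=
  le_iSup (fun X : {X : Ω → ℝ // MemLinf μ X} =>
    (((∫ ω, X.1 ω * Z' ω ∂μ) - φ₀ X.1 : ℝ) : EReal)) ⟨X, hX⟩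

/-- for `U ∈ M^φ̂` with `U ≥ 1` a.s., the function
`g_U(Z) = φ₀*(Z/U)` is coercive on `L¹`: `g_U(Z)/‖Z‖₁ → ∞` as `‖Z‖₁ → ∞`. -/
theorem stmt15 (μ : Measure Ω) [IsProbabilityMeasure μ]
    (φ₀ : (Ω → ℝ) → ℝ) (h : Standing μ φ₀)
    (U : Ω → ℝ) (hU : MemM μ φ₀ U) (hU1 : ∀ᵐ ω ∂μ, 1 ≤ U ω) :
    ∀ C : ℝ, ∃ R : ℝ, ∀ Z : Ω → ℝ, Integrable Z μ →
      R ≤ ∫ ω, |Z ω| ∂μ →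
      ((C * ∫ ω, |Z ω| ∂μ : ℝ) : EReal) ≤ conj μ φ₀ (fun ω => Z ω / U ω) := by
  have hmeas : AEStronglyMeasurable U μ := hU.1
  -- reduce to the case `C > 0`
  suffices H : ∀ C : ℝ, 0 < C → ∃ R : ℝ, ∀ Z : Ω → ℝ, Integrable Z μ →
      R ≤ ∫ ω, |Z ω| ∂μ →
      ((C * ∫ ω, |Z ω| ∂μ : ℝ) : EReal) ≤ conj μ φ₀ (fun ω => Z ω / U ω) by
    intro C
    obtain ⟨R, hR⟩ := H (max C 1) (lt_of_lt_of_le one_pos (le_max_right C 1))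
    refine ⟨max R 0, fun Z hZ hRZ => ?_⟩
    have hI0 : (0 : ℝ) ≤ ∫ ω, |Z ω| ∂μ := le_trans (le_max_right R 0) hRZ
    refine le_trans ?_ (hR Z hZ (le_trans (le_max_left R 0) hRZ))
    exact EReal.coe_le_coe_iff.2 (mul_le_mul_of_nonneg_right (le_max_left C 1) hI0)
  intro C hC
  have hKlt : hatphi μ φ₀ (fun ω => 2 * C * |U ω|) < ⊤ := hU.2 (2 * C) (by positivity)
  set K := hatphi μ φ₀ (fun ω => 2 * C * |U ω|) with hKdef
  refine ⟨max (K.toReal / C) 0, fun Z hZ hRZ => ?_⟩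
  have hInn : (0 : ℝ) ≤ ∫ ω, |Z ω| ∂μ := integral_nonneg fun ω => abs_nonneg _
  set Z' := fun ω => Z ω / U ω with hZ'def
  rcases eq_top_or_lt_top (conj μ φ₀ Z') with htop | hlt
  · rw [htop]; exact le_top
  have h0mem : MemLinf μ (0 : Ω → ℝ) := MemLp.zero
  have hconj0 : (0 : EReal) ≤ conj μ φ₀ Z' := by
    have h1 := le_conj_term μ φ₀ Z' h0mem
    have h2 : (∫ ω, (0 : Ω → ℝ) ω * Z' ω ∂μ) - φ₀ 0 = 0 := by simp [h.zero]
    rw [h2] at h1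
    simpa using h1
  have hbot : conj μ φ₀ Z' ≠ ⊥ := by
    intro hb
    rw [hb, le_bot_iff] at hconj0
    exact absurd hconj0 (by simp)
  set c := (conj μ φ₀ Z').toReal with hcdef
  have hconjc : conj μ φ₀ Z' = (c : EReal) := (EReal.coe_toReal hlt.ne hbot).symm
  have hc0 : (0 : ℝ) ≤ c := by
    rw [hconjc] at hconj0
    exact_mod_cast hconj0
  by_cases hneg : ∫ ω, max (-(Z ω)) 0 ∂μ = 0
  · -- `Z ≥ 0` a.e.: the main case
    have hznegint : Integrable (fun ω => max (-(Z ω)) 0) μ := hZ.neg'.pos_part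
    have hZpos : ∀ᵐ ω ∂μ, 0 ≤ Z ω := by
      have h0 := (integral_eq_zero_iff_of_nonneg
        (fun ω => le_max_right _ _) hznegint).1 hneg
      filter_upwards [h0] with ω hω
      have h1 : -(Z ω) ≤ max (-(Z ω)) 0 := le_max_left _ _
      have h2 : max (-(Z ω)) 0 = 0 := hω
      linarith
    have hZ'm : AEStronglyMeasurable Z' μ :=
      (hZ.aemeasurable.div hmeas.aemeasurable).aestronglyMeasurable
    have hZ'int : Integrable Z' μ := by
      refine hZ.mono hZ'm ?_
      filter_upwards [hU1] with ω hω
      have hUpos : (0 : ℝ) < U ω := lt_of_lt_of_le one_pos hω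
      simp only [hZ'def, Real.norm_eq_abs]
      rw [abs_div, abs_of_pos hUpos]
      exact div_le_self (abs_nonneg _) hω
    have hdom : MemDom μ φ₀ Z' := ⟨hZ'int, hlt⟩
    have hF : eE μ (fun ω => (2 * C * |U ω|) * Z' ω) - conj μ φ₀ Z' ≤ K := by
      rw [hKdef]
      exact le_iSup (fun Z0 : {Z0 : Ω → ℝ // MemDom μ φ₀ Z0} =>
        eE μ (fun ω => (2 * C * |U ω|) * Z0.1 ω) - conj μ φ₀ Z0.1) ⟨Z', hdom⟩
    have hg_int : Integrable (fun ω => 2 * C * |Z ω|) μ := hZ.abs.const_mul (2 * C)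
    have hg_nn : 0 ≤ᵐ[μ] fun ω => 2 * C * |Z ω| := ae_of_all μ fun ω => by positivity
    have hfg : (fun ω => (2 * C * |U ω|) * Z' ω) =ᵐ[μ] fun ω => 2 * C * |Z ω| := by
      filter_upwards [hU1, hZpos] with ω h1 h2
      have hUpos : (0 : ℝ) < U ω := lt_of_lt_of_le one_pos h1
      simp only [hZ'def]
      rw [abs_of_pos hUpos, abs_of_nonneg h2]
      field_simp
    have heE : eE μ (fun ω => (2 * C * |U ω|) * Z' ω)
        = ((2 * C * ∫ ω, |Z ω| ∂μ : ℝ) : EReal) := by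
      have e1 : ∫⁻ ω, ENNReal.ofReal ((2 * C * |U ω|) * Z' ω) ∂μ
          = ENNReal.ofReal (2 * C * ∫ ω, |Z ω| ∂μ) := by
        rw [lintegral_congr_ae (by filter_upwards [hfg] with ω hω; exact congrArg ENNReal.ofReal hω),
          ← ofReal_integral_eq_lintegral_ofReal hg_int hg_nn, integral_const_mul]
      have e2 : ∫⁻ ω, ENNReal.ofReal (-((2 * C * |U ω|) * Z' ω)) ∂μ = 0 := by
        have h0 : (fun ω => ENNReal.ofReal (-((2 * C * |U ω|) * Z' ω)))
            =ᵐ[μ] fun _ => (0 : ℝ≥0∞) := by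
          filter_upwards [hfg] with ω hω
          rw [hω]
          exact ENNReal.ofReal_eq_zero.2 (neg_nonpos.2 (by positivity))
        rw [lintegral_congr_ae h0, lintegral_zero]
      have hnn : (0 : ℝ) ≤ 2 * C * ∫ ω, |Z ω| ∂μ := by nlinarith
      simp only [eE, e1, e2]
      rw [EReal.coe_ennreal_ofReal, max_eq_left hnn]
      simp
    rw [heE, hconjc, ← EReal.coe_sub] at hF
    have hKbot : K ≠ ⊥ := by
      intro hb
      rw [hb, le_bot_iff] at hF
      exact EReal.coe_ne_bot _ hF
    rw [← EReal.coe_toReal hKlt.ne hKbot] at hF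
    have hreal : 2 * C * (∫ ω, |Z ω| ∂μ) - c ≤ K.toReal := EReal.coe_le_coe_iff.1 hF
    have hkCI : K.toReal ≤ C * ∫ ω, |Z ω| ∂μ := by
      have h1 : K.toReal / C ≤ ∫ ω, |Z ω| ∂μ := le_trans (le_max_left _ _) hRZ
      calc K.toReal = K.toReal / C * C := by field_simp
        _ ≤ (∫ ω, |Z ω| ∂μ) * C := mul_le_mul_of_nonneg_right h1 hC.le
        _ = C * ∫ ω, |Z ω| ∂μ := mul_comm _ _
    rw [hconjc]
    exact EReal.coe_le_coe_iff.2 (by linarith)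
  · -- `∫ Z⁻ > 0`: the conjugate is `⊤`, contradiction with `hlt`
    exfalso
    have hznegint : Integrable (fun ω => max (-(Z ω)) 0) μ := hZ.neg'.pos_part
    have hδ : 0 < ∫ ω, max (-(Z ω)) 0 ∂μ :=
      lt_of_le_of_ne (integral_nonneg fun ω => le_max_right _ _) (Ne.symm hneg)
    have hFcont : Continuous fun x : ℝ => min (max (-x) 0) 1 * max (-x) 0 := by
      fun_prop
    have hFnn : ∀ x : ℝ, 0 ≤ min (max (-x) 0) 1 * max (-x) 0 := fun x =>
      mul_nonneg (le_min (le_max_right _ _) zero_le_one) (le_max_right _ _)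
    have hFle : ∀ x : ℝ, min (max (-x) 0) 1 * max (-x) 0 ≤ |x| := fun x => by
      calc min (max (-x) 0) 1 * max (-x) 0 ≤ 1 * max (-x) 0 :=
            mul_le_mul_of_nonneg_right (min_le_right _ _) (le_max_right _ _)
        _ = max (-x) 0 := one_mul _
        _ ≤ |x| := max_le (neg_le_abs x) (abs_nonneg x)
    set hfun := fun ω => min (max (-(Z ω)) 0) 1 * max (-(Z ω)) 0 / U ω with hfdef
    have hfm : AEStronglyMeasurable hfun μ :=
      ((hFcont.comp_aestronglyMeasurable hZ.1).aemeasurable.div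
        hmeas.aemeasurable).aestronglyMeasurable
    have hfint : Integrable hfun μ := by
      refine hZ.mono hfm ?_
      filter_upwards [hU1] with ω hω
      simp only [hfdef, Real.norm_eq_abs]
      rw [abs_div, abs_of_pos (lt_of_lt_of_le one_pos hω)]
      calc |min (max (-(Z ω)) 0) 1 * max (-(Z ω)) 0| / U ω
          ≤ |min (max (-(Z ω)) 0) 1 * max (-(Z ω)) 0| := div_le_self (abs_nonneg _) hω
        _ = min (max (-(Z ω)) 0) 1 * max (-(Z ω)) 0 := abs_of_nonneg (hFnn _)
        _ ≤ |Z ω| := hFle _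
    have hfnn : 0 ≤ᵐ[μ] hfun := by
      filter_upwards [hU1] with ω hω
      exact div_nonneg (hFnn _) (le_trans zero_le_one hω)
    have hε : 0 < ∫ ω, hfun ω ∂μ := by
      rcases lt_or_eq_of_le (integral_nonneg_of_ae hfnn) with h' | h'
      · exact h'
      exfalso
      have hf0 : hfun =ᵐ[μ] 0 := (integral_eq_zero_iff_of_nonneg_ae hfnn hfint).1 h'.symm
      have hzneg0 : (fun ω => max (-(Z ω)) 0) =ᵐ[μ] 0 := by
        filter_upwards [hf0, hU1] with ω h1 h2
        have hUne : U ω ≠ 0 := ne_of_gt (lt_of_lt_of_le one_pos h2)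
        have hF0 : min (max (-(Z ω)) 0) 1 * max (-(Z ω)) 0 = 0 := by
          have h3 : min (max (-(Z ω)) 0) 1 * max (-(Z ω)) 0 / U ω = 0 := h1
          rcases div_eq_zero_iff.1 h3 with h4 | h4
          · exact h4
          · exact absurd h4 hUne
        by_contra hne
        have hzpos : 0 < max (-(Z ω)) 0 := by
          rcases lt_or_eq_of_le (le_max_right (-(Z ω)) 0) with h5 | h5
          · exact h5
          · exact absurd h5.symm (by simpa using hne)
        exact absurd hF0 (ne_of_gt (mul_pos (lt_min hzpos one_pos) hzpos))
      exact hneg ((integral_congr_ae hzneg0).trans (by simp))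
    have key : ∀ n : ℕ, (n : ℝ) * ∫ ω, hfun ω ∂μ ≤ c := by
      intro n
      set Xn := fun ω => -(n : ℝ) * min (max (-(Z ω)) 0) 1 with hXndef
      have hXnm : AEStronglyMeasurable Xn μ := by
        have hcont : Continuous fun x : ℝ => -(n : ℝ) * min (max (-x) 0) 1 := by fun_prop
        exact hcont.comp_aestronglyMeasurable hZ.1
      have hXnmem : MemLinf μ Xn := by
        refine memLp_top_of_bound hXnm (n : ℝ) (ae_of_all μ fun ω => ?_)
        simp only [hXndef, Real.norm_eq_abs]
        rw [abs_mul, abs_neg, abs_of_nonneg (Nat.cast_nonneg n)]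
        have h1 : |min (max (-(Z ω)) 0) 1| ≤ 1 := by
          rw [abs_of_nonneg (le_min (le_max_right _ _) zero_le_one)]
          exact min_le_right _ _
        nlinarith [Nat.cast_nonneg (α := ℝ) n]
      have hXnle : φ₀ Xn ≤ 0 := by
        have hm := h.mc.mono Xn 0 hXnmem h0mem (ae_of_all μ fun ω => by
          simp only [hXndef, Pi.zero_apply]
          exact mul_nonpos_of_nonpos_of_nonneg (neg_nonpos.2 (Nat.cast_nonneg n))
            (le_min (le_max_right _ _) zero_le_one))
        rw [h.zero] at hm
        exact hm
      have hterm := le_conj_term μ φ₀ Z' hXnmem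
      have hint : ∫ ω, Xn ω * Z' ω ∂μ = (n : ℝ) * ∫ ω, hfun ω ∂μ := by
        rw [← integral_const_mul]
        refine integral_congr_ae (ae_of_all μ fun ω => ?_)
        have key2 : -(min (max (-(Z ω)) 0) 1 * Z ω)
            = min (max (-(Z ω)) 0) 1 * max (-(Z ω)) 0 := by
          rcases le_total (Z ω) 0 with ht | ht
          · rw [max_eq_left (neg_nonneg.2 ht)]; ring
          · rw [max_eq_right (neg_nonpos.2 ht)]
            simp
        calc Xn ω * Z' ω = (n : ℝ) * (-(min (max (-(Z ω)) 0) 1 * Z ω)) / U ω := by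
              simp only [hXndef, hZ'def]; ring
          _ = (n : ℝ) * hfun ω := by rw [key2]; simp only [hfdef]; ring
      rw [hint, hconjc] at hterm
      have h6 := EReal.coe_le_coe_iff.1 hterm
      linarith
    obtain ⟨n, hn⟩ := exists_nat_gt (c / ∫ ω, hfun ω ∂μ)
    have h1 := key n
    have h2 : c < (n : ℝ) * ∫ ω, hfun ω ∂μ := by
      have := (div_lt_iff₀ hε).1 hn
      linarith
    linarith

end MaxLebExt
end
end

section
/- Let ψ : 𝒳 → ℝ be a finite monotone convex function on a solid space 𝒳 ⊆ L⁰. If X, Y ∈ 𝒳 satisfy ψ(α|X − Y|) = 0 for all α > 0, then ψ(X) = ψ(Y). -/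
open MeasureTheory Filter Topology
open scoped ENNReal

noncomputable section

namespace MaxLebExt

variable {Ω : Type*} [MeasurableSpace Ω]

private theorem stmt16_aux (μ : Measure Ω) [IsProbabilityMeasure μ]
    (S : Set (Ω → ℝ)) (hS : IsSolidSpace μ S)
    (ψ : (Ω → ℝ) → ℝ) (hmc : IsMCOn μ S ψ)
    (X Y : Ω → ℝ) (hX : X ∈ S) (hY : Y ∈ S)
    (hzero : ∀ α : ℝ, 0 < α → ψ (fun ω => α * |X ω - Y ω|) = 0) :
    ψ X ≤ ψ Y := by
  -- |X - Y| ∈ S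
  have hXY : X + (fun ω => (-1 : ℝ) * Y ω) ∈ S := hS.add X hX _ (hS.smul (-1) Y hY)
  have hD : (fun ω => |X ω - Y ω|) ∈ S := by
    refine hS.solid _ ?_ _ hXY ?_
    · have : AEStronglyMeasurable (fun ω => X ω - Y ω) μ :=
        (hS.aesm X hX).sub (hS.aesm Y hY)
      simpa [Real.norm_eq_abs] using this.norm
    · filter_upwards with ω
      simp only [Pi.add_apply, abs_abs]
      have h' : X ω + -1 * Y ω = X ω - Y ω := by ring
      rw [h']
  have h2Y : (fun ω => 2 * Y ω) ∈ S := hS.smul 2 Y hY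
  -- main estimate for each t ∈ (0,1)
  have hmain : ∀ t : ℝ, 0 < t → t < 1 →
      ψ X ≤ t * ((1 / 2) * ψ (fun ω => 2 * Y ω)) + (1 - t) * ψ Y := by
    intro t ht0 ht1
    have hα : (0 : ℝ) < 2 / t := by positivity
    have htD : (fun ω => (2 / t) * |X ω - Y ω|) ∈ S := hS.smul _ _ hD
    have hinvD : (fun ω => (1 / t) * |X ω - Y ω|) ∈ S := hS.smul _ _ hD
    have hW : (fun ω => Y ω + (1 / t) * |X ω - Y ω|) ∈ S := by
      have := hS.add Y hY _ hinvD
      exact this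
    have hYD : (fun ω => Y ω + |X ω - Y ω|) ∈ S := by
      have := hS.add Y hY _ hD
      exact this
    -- ψ X ≤ ψ (Y + |X - Y|)
    have h1 : ψ X ≤ ψ (fun ω => Y ω + |X ω - Y ω|) := by
      refine hmc.mono X hX _ hYD ?_
      filter_upwards with ω
      have := le_abs_self (X ω - Y ω)
      linarith
    -- ψ (Y + |X-Y|) ≤ t ψ W + (1-t) ψ Y
    have h2 := hmc.convex _ hW Y hY t ht0.le ht1.le
    have heq1 : (fun ω => t * (Y ω + (1 / t) * |X ω - Y ω|) + (1 - t) * Y ω)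
        = fun ω => Y ω + |X ω - Y ω| := by
      funext ω; field_simp; ring
    rw [heq1] at h2
    -- ψ W ≤ (1/2) ψ (2Y) + (1/2) ψ ((2/t)|X-Y|) = (1/2) ψ (2Y)
    have h3 := hmc.convex _ h2Y _ htD (1 / 2) (by norm_num) (by norm_num)
    have heq2 : (fun ω => (1 / 2 : ℝ) * (2 * Y ω) + (1 - 1 / 2) * ((2 / t) * |X ω - Y ω|))
        = fun ω => Y ω + (1 / t) * |X ω - Y ω| := by
      funext ω; field_simp; ring
    rw [heq2, hzero _ hα] at h3
    have hψW : ψ (fun ω => Y ω + (1 / t) * |X ω - Y ω|)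
        ≤ (1 / 2) * ψ (fun ω => 2 * Y ω) := by linarith
    calc ψ X ≤ ψ (fun ω => Y ω + |X ω - Y ω|) := h1
      _ ≤ t * ψ (fun ω => Y ω + (1 / t) * |X ω - Y ω|) + (1 - t) * ψ Y := h2
      _ ≤ t * ((1 / 2) * ψ (fun ω => 2 * Y ω)) + (1 - t) * ψ Y := by nlinarith
  -- pass to the limit t → 0
  set K : ℝ := (1 / 2) * ψ (fun ω => 2 * Y ω) - ψ Y with hK
  refine le_of_forall_pos_le_add fun ε hε => ?_
  set t : ℝ := min (1 / 2) (ε / (|K| + 1)) with htdef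
  have ht0 : 0 < t := lt_min (by norm_num) (by positivity)
  have ht1 : t < 1 := lt_of_le_of_lt (min_le_left _ _) (by norm_num)
  have h := hmain t ht0 ht1
  have htK : t * K ≤ ε := by
    have h1 : t * K ≤ t * |K| := by
      have := le_abs_self K
      nlinarith
    have h2 : t * |K| ≤ (ε / (|K| + 1)) * |K| := by
      have := min_le_right (1 / 2 : ℝ) (ε / (|K| + 1))
      have hKnn := abs_nonneg K
      nlinarith
    have h3 : (ε / (|K| + 1)) * |K| ≤ ε := by
      rw [div_mul_eq_mul_div, div_le_iff₀ (by positivity)]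
      nlinarith [abs_nonneg K]
    linarith
  have : ψ X ≤ ψ Y + t * K := by
    have : t * ((1 / 2) * ψ (fun ω => 2 * Y ω)) + (1 - t) * ψ Y = ψ Y + t * K := by
      rw [hK]; ring
    rw [this] at h
    linarith
  linarith

/-- if `ψ` is a finite monotone convex function on a solid space `S`
and `ψ(α|X − Y|) = 0` for all `α > 0`, then `ψ(X) = ψ(Y)`. -/
theorem stmt16 (μ : Measure Ω) [IsProbabilityMeasure μ]
    (S : Set (Ω → ℝ)) (hS : IsSolidSpace μ S)
    (ψ : (Ω → ℝ) → ℝ) (hmc : IsMCOn μ S ψ)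
    (X Y : Ω → ℝ) (hX : X ∈ S) (hY : Y ∈ S)
    (hzero : ∀ α : ℝ, 0 < α → ψ (fun ω => α * |X ω - Y ω|) = 0) :
    ψ X = ψ Y := by
  have hzero' : ∀ α : ℝ, 0 < α → ψ (fun ω => α * |Y ω - X ω|) = 0 := by
    intro α hα
    simpa [abs_sub_comm] using hzero α hα
  exact le_antisymm (stmt16_aux μ S hS ψ hmc X Y hX hY hzero)
    (stmt16_aux μ S hS ψ hmc Y X hY hX hzero')

end MaxLebExt
end
end

section
/- Let C be a convex subset of a Hausdorff topological vector space, D an arbitrary convex set, and f : C × D → ℝ a function such that (i) for each y ∈ D, x ↦ f(x, y) is convex on C and the sublevel set {x ∈ C : f(x, y) ≤ c} is compact for every c ∈ ℝ, and (ii) for each x ∈ C, y ↦ f(x, y) is concave on D. Then inf_{x ∈ C} sup_{y ∈ D} f(x, y) = sup_{y ∈ D} inf_{x ∈ C} f(x, y). -/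
open MeasureTheory Filter Topology
open scoped ENNReal

noncomputable section

namespace MaxLebExt

variable {Ω : Type*} [MeasurableSpace Ω]

theorem minimax_finite' {E F : Type*} [AddCommGroup E] [Module ℝ E]
    [AddCommGroup F] [Module ℝ F]
    {C : Set E} (hC : Convex ℝ C) {D : Set F} (hD : Convex ℝ D)
    {f : E → F → ℝ}
    (hconv : ∀ y ∈ D, ConvexOn ℝ C fun x => f x y)
    (hconc : ∀ x ∈ C, ConcaveOn ℝ D fun y => f x y)
    {x₀ : E} (hx₀ : x₀ ∈ C) {c : ℝ}
    (hβ : ∀ y ∈ D, ∃ x ∈ C, f x y < c)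
    {ι : Type*} [Fintype ι] (ys : ι → F) (hy : ∀ i, ys i ∈ D) :
    ∃ x ∈ C, ∀ i, f x (ys i) ≤ c := by
  classical
  by_contra hcon
  push_neg at hcon
  cases isEmpty_or_nonempty ι with
  | inl hempty =>
    obtain ⟨i, _⟩ := hcon x₀ hx₀
    exact hempty.elim i
  | inr hne =>
  set A : Set (ι → ℝ) := {a | ∃ x ∈ C, ∀ i, f x (ys i) < a i} with hA
  have hAopen : IsOpen A := by
    have : A = ⋃ x ∈ C, Set.pi Set.univ (fun i => Set.Ioi (f x (ys i))) := by
      ext a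
      simp [hA, Set.mem_pi]
    rw [this]
    exact isOpen_biUnion fun x _ => isOpen_set_pi Set.finite_univ (fun i _ => isOpen_Ioi)
  have hAconv : Convex ℝ A := by
    rintro a ⟨x₁, hx₁, h₁⟩ b ⟨x₂, hx₂, h₂⟩ s t hs ht hst
    refine ⟨s • x₁ + t • x₂, hC hx₁ hx₂ hs ht hst, fun i => ?_⟩
    have hcv := (hconv (ys i) (hy i)).2 hx₁ hx₂ hs ht hst
    simp only [smul_eq_mul] at hcv ⊢
    have hst' : 0 < s ∨ 0 < t := by
      by_contra hn; push_neg at hn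
      have : s = 0 := le_antisymm hn.1 hs
      have : t = 0 := le_antisymm hn.2 ht
      simp_all
    have key : s * f x₁ (ys i) + t * f x₂ (ys i) < s * a i + t * b i := by
      rcases hst' with hs' | ht'
      · nlinarith [mul_lt_mul_of_pos_left (h₁ i) hs', mul_le_mul_of_nonneg_left (h₂ i).le ht]
      · nlinarith [mul_lt_mul_of_pos_left (h₂ i) ht', mul_le_mul_of_nonneg_left (h₁ i).le hs]
    exact lt_of_le_of_lt hcv key
  have hcnot : (fun _ : ι => c) ∉ A := by
    rintro ⟨x, hx, hlt⟩
    obtain ⟨i, hi⟩ := hcon x hx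
    exact absurd (hlt i) (not_lt.2 hi.le)
  obtain ⟨g, hg⟩ := geometric_hahn_banach_open_point hAconv hAopen hcnot
  have hrep : ∀ a : ι → ℝ, g a = ∑ i, a i * g (Pi.single i 1) := by
    intro a
    have ha : a = ∑ i, a i • (Pi.single i 1 : ι → ℝ) := by
      ext j
      simp [Pi.single_apply, Finset.sum_apply, Finset.sum_ite_eq']
    conv_lhs => rw [ha]
    rw [map_sum]
    simp [smul_eq_mul]
  set μ : ι → ℝ := fun i => -(g (Pi.single i 1)) with hμ
  have ha₀ : (fun i => f x₀ (ys i) + 1) ∈ A := ⟨x₀, hx₀, fun i => by simp⟩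
  have hga₀ : g (fun i => f x₀ (ys i) + 1) < g (fun _ => c) := hg _ ha₀
  have hμnn : ∀ i, 0 ≤ μ i := by
    intro i
    by_contra hneg
    push_neg at hneg
    have hgpos : 0 < g (Pi.single i 1) := by simpa [hμ] using hneg
    set a₀ : ι → ℝ := fun j => f x₀ (ys j) + 1 with ha₀def
    set t : ℝ := (g (fun _ => c) - g a₀ + 1) / g (Pi.single i 1) with htdef
    have ht : 0 < t := div_pos (by linarith) hgpos
    have hmem : a₀ + t • (Pi.single i 1 : ι → ℝ) ∈ A := by
      refine ⟨x₀, hx₀, fun j => ?_⟩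
      have : (0:ℝ) ≤ t * (Pi.single i 1 : ι → ℝ) j := by
        rcases eq_or_ne j i with rfl | hji
        · simp [ht.le]
        · simp [Pi.single_apply, hji]
      simp only [Pi.add_apply, Pi.smul_apply, smul_eq_mul, ha₀def]
      linarith
    have := hg _ hmem
    rw [map_add, _root_.map_smul, smul_eq_mul, htdef, div_mul_cancel₀ _ (ne_of_gt hgpos)] at this
    linarith
  set S : ℝ := ∑ i, μ i with hS
  have hSnn : 0 ≤ S := Finset.sum_nonneg fun i _ => hμnn i
  have hSpos : 0 < S := by
    rcases hSnn.lt_or_eq with h | h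
    · exact h
    have hall : ∀ i ∈ Finset.univ, μ i = 0 :=
      (Finset.sum_eq_zero_iff_of_nonneg (fun i _ => hμnn i)).1 h.symm
    have hgz : ∀ a : ι → ℝ, g a = 0 := by
      intro a
      rw [hrep a]
      refine Finset.sum_eq_zero fun i _ => ?_
      have := hall i (Finset.mem_univ i)
      simp only [hμ, neg_eq_zero] at this
      rw [this, mul_zero]
    rw [hgz, hgz] at hga₀
    exact absurd hga₀ (lt_irrefl 0)
  have hmain : ∀ x ∈ C, c * S ≤ ∑ i, μ i * f x (ys i) := by
    intro x hx
    refine le_of_forall_pos_lt_add fun ε hε => ?_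
    set t : ℝ := ε / S with htdef
    have ht : 0 < t := div_pos hε hSpos
    have hmem : (fun i => f x (ys i) + t) ∈ A := ⟨x, hx, fun i => by show f x (ys i) < f x (ys i) + t; linarith⟩
    have hglt := hg _ hmem
    rw [hrep, hrep] at hglt
    have h1 : ∑ i, (f x (ys i) + t) * g (Pi.single i 1)
        = -((∑ i, μ i * f x (ys i)) + t * S) := by
      simp only [hμ, hS, Finset.mul_sum, ← Finset.sum_add_distrib, neg_add,
        ← Finset.sum_neg_distrib]
      exact Finset.sum_congr rfl fun i _ => by ring
    have h2 : ∑ i, c * g (Pi.single i 1) = -(c * S) := by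
      simp only [hμ, hS, Finset.mul_sum, ← Finset.sum_neg_distrib]
      exact Finset.sum_congr rfl fun i _ => by ring
    rw [h1, h2, neg_lt_neg_iff] at hglt
    have : t * S = ε := div_mul_cancel₀ _ (ne_of_gt hSpos)
    linarith
  set w : ι → ℝ := fun i => μ i / S with hw
  have hwnn : ∀ i ∈ Finset.univ, 0 ≤ w i := fun i _ => div_nonneg (hμnn i) hSnn
  have hwsum : ∑ i, w i = 1 := by
    rw [hw]
    rw [← Finset.sum_div, ← hS, div_self (ne_of_gt hSpos)]
  set ystar : F := ∑ i, w i • ys i with hystar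
  have hystarD : ystar ∈ D := hD.sum_mem hwnn hwsum fun i _ => hy i
  obtain ⟨x, hx, hxlt⟩ := hβ ystar hystarD
  have hjensen : ∑ i, w i • f x (ys i) ≤ f x ystar :=
    (hconc x hx).le_map_sum hwnn hwsum fun i _ => hy i
  have hcalc : c ≤ ∑ i, w i • f x (ys i) := by
    have := hmain x hx
    have heq : ∑ i, w i • f x (ys i) = (∑ i, μ i * f x (ys i)) / S := by
      rw [Finset.sum_div]
      exact Finset.sum_congr rfl fun i _ => by simp [hw, smul_eq_mul]; ring
    rw [heq, le_div_iff₀ hSpos]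
    linarith
  linarith [hcalc.trans hjensen]

/-- minimax theorem: if `C` is a convex subset of a Hausdorff
topological vector space, `D` a convex set, and `f : C × D → ℝ` is convex with compact
sublevel sets in the first variable and concave in the second, then
`inf_C sup_D f = sup_D inf_C f`. -/
theorem stmt19 {E F : Type*} [AddCommGroup E] [Module ℝ E] [TopologicalSpace E]
    [T2Space E] [IsTopologicalAddGroup E] [ContinuousSMul ℝ E]
    [AddCommGroup F] [Module ℝ F]
    (C : Set E) (hC : Convex ℝ C) (D : Set F) (hD : Convex ℝ D)
    (hne : C.Nonempty ∨ D.Nonempty)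
    (f : E → F → ℝ)
    (hconv : ∀ y ∈ D, ConvexOn ℝ C fun x => f x y)
    (hcomp : ∀ y ∈ D, ∀ c : ℝ, IsCompact {x | x ∈ C ∧ f x y ≤ c})
    (hconc : ∀ x ∈ C, ConcaveOn ℝ D fun y => f x y) :
    ⨅ x ∈ C, ⨆ y ∈ D, (f x y : EReal) = ⨆ y ∈ D, ⨅ x ∈ C, (f x y : EReal) := by
  classical
  rcases D.eq_empty_or_nonempty with rfl | hDne
  · obtain ⟨x₀, hx₀⟩ : C.Nonempty := hne.resolve_right (by simp)
    simp only [Set.mem_empty_iff_false, iSup_false, iSup_bot]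
    exact le_antisymm (iInf₂_le_of_le x₀ hx₀ le_rfl) bot_le
  rcases C.eq_empty_or_nonempty with rfl | hCne
  · simp only [Set.mem_empty_iff_false, iInf_false, iInf_top]
    obtain ⟨y₀, hy₀⟩ := hDne
    exact le_antisymm (le_iSup₂_of_le y₀ hy₀ le_rfl) le_top
  obtain ⟨x₀, hx₀⟩ := hCne
  refine le_antisymm ?_ ?_
  swap
  · exact iSup₂_le fun y hy => le_iInf₂ fun x hx =>
      le_trans (iInf₂_le x hx) (le_iSup₂_of_le y hy le_rfl)
  set β := ⨆ y ∈ D, ⨅ x ∈ C, (f x y : EReal) with hβdef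
  by_contra hlt
  push_neg at hlt
  obtain ⟨c, hc1, hc2⟩ := EReal.exists_between_coe_real hlt
  refine absurd hc2 (not_lt.2 ?_)
  -- show LHS ≤ c
  have hβ' : ∀ y ∈ D, ∃ x ∈ C, f x y < c := by
    intro y hy
    have h1 : ⨅ x ∈ C, (f x y : EReal) < (c : EReal) :=
      lt_of_le_of_lt (le_iSup₂ (f := fun y _ => ⨅ x ∈ C, (f x y : EReal)) y hy) hc1
    simp only [iInf_lt_iff] at h1
    obtain ⟨x, hx, hxy⟩ := h1
    exact ⟨x, hx, EReal.coe_lt_coe_iff.1 hxy⟩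
  obtain ⟨y₀, hy₀⟩ := hDne
  set Z : D → Set E := fun y => {x | x ∈ C ∧ f x y.1 ≤ c} with hZ
  have hZcl : ∀ y : D, IsClosed (Z y) := fun y => (hcomp y.1 y.2 c).isClosed
  have hfip : ∀ u : Finset ↥D, (Z ⟨y₀, hy₀⟩ ∩ ⋂ y ∈ u, Z y).Nonempty := by
    intro u
    set u' : Finset ↥D := insert ⟨y₀, hy₀⟩ u with hu'
    obtain ⟨x, hx, hxall⟩ := minimax_finite' hC hD hconv hconc hx₀ hβ'
      (ι := {i // i ∈ u'}) (fun i => (i.1 : F)) (fun i => i.1.2)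
    refine ⟨x, ⟨hx, hxall ⟨⟨y₀, hy₀⟩, Finset.mem_insert_self _ _⟩⟩, ?_⟩
    simp only [Set.mem_iInter]
    intro y hy
    exact ⟨hx, hxall ⟨y, Finset.mem_insert_of_mem hy⟩⟩
  obtain ⟨x, -, hxmem⟩ :=
    (hcomp y₀ hy₀ c).inter_iInter_nonempty Z hZcl hfip
  simp only [Set.mem_iInter] at hxmem
  have hxC : x ∈ C := (hxmem ⟨y₀, hy₀⟩).1
  refine iInf₂_le_of_le x hxC (iSup₂_le fun y hy => ?_)
  exact EReal.coe_le_coe_iff.2 (hxmem ⟨y, hy⟩).2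

end MaxLebExt
end
end
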